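/- arXiv:2210.01224 — 2 statements merged into one kernel-verified Lean document; each statement's English description precedes it below -/
import Mathlib

section
/- Let M = M_{ap^α, bp^α} be a local singular ACM with least power β such that p^β ∈ M, and suppose α < β. Then the catenary degree of M equals 1 + ⌈β/α⌉. -/
/-- Membership in the arithmetical congruence monoid `M_{a,b} = (a + b ℕ₀) ∪ {1}`. -/
def acmMem (a b x : ℕ) : Prop := x = 1 ∨ ∃ k : ℕ, x = a + k * b

/-- `x` is an atom (irreducible) of `M_{a,b}`. -/
def acmAtom (a b x : ℕ) : Prop :=
  acmMem a b x ∧ x ≠ 1 ∧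
    ∀ y z : ℕ, acmMem a b y → acmMem a b z → x = y * z → y = 1 ∨ z = 1

/-- `s` is a factorization of `x` into atoms of `M_{a,b}`. -/
def acmFactorization (a b x : ℕ) (s : Multiset ℕ) : Prop :=
  (∀ u ∈ s, acmAtom a b u) ∧ s.prod = x

/-- The distance between two factorizations. -/
def facDist (s t : Multiset ℕ) : ℕ := max (Multiset.card (s - t)) (Multiset.card (t - s))

/-- There is an `N`-chain of factorizations of `x` from `z₁` to `z₂` in `M_{a,b}`. -/
def acmNChain (a b x N : ℕ) (z₁ z₂ : Multiset ℕ) : Prop :=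
  ∃ L : List (Multiset ℕ), L ≠ [] ∧ L.head? = some z₁ ∧ L.getLast? = some z₂ ∧
    (∀ z ∈ L, acmFactorization a b x z) ∧ L.Chain' (fun s t => facDist s t ≤ N)

/-- The set of `N` such that any two factorizations of any element of `M_{a,b}`
are connected by an `N`-chain; `c(M) = n` iff `n` is the least element of this set. -/
def acmCatSet (a b : ℕ) : Set ℕ :=
  {N | ∀ x, acmMem a b x → ∀ z₁ z₂, acmFactorization a b x z₁ →
      acmFactorization a b x z₂ → acmNChain a b x N z₁ z₂}

/-- Divisibility inside the monoid `M_{a,b}`. -/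
def acmDvd (a b x y : ℕ) : Prop := ∃ k, acmMem a b k ∧ x * k = y

/-- `s` is a bullet of `x` in `M_{a,b}`. -/
def acmBullet (a b x : ℕ) (s : Multiset ℕ) : Prop :=
  (∀ u ∈ s, acmAtom a b u) ∧ acmDvd a b x s.prod ∧
    ∀ t : Multiset ℕ, t ≤ s → t ≠ s → ¬ acmDvd a b x t.prod

/-- Omega primality of `x` in `M_{a,b}`: the sup of the lengths of bullets of `x`. -/
noncomputable def acmOmega (a b x : ℕ) : ℕ∞ :=
  sSup {n : ℕ∞ | ∃ s : Multiset ℕ, acmBullet a b x s ∧ (Multiset.card s : ℕ∞) = n}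

/-- The set of factorization lengths of `x` in `M_{a,b}`. -/
def acmLengthSet (a b x : ℕ) : Set ℕ :=
  {n | ∃ s : Multiset ℕ, acmFactorization a b x s ∧ Multiset.card s = n}

/-- `x` has at least two distinct factorization lengths. -/
def acmLI (a b x : ℕ) : Prop := ∃ m ∈ acmLengthSet a b x, ∃ n ∈ acmLengthSet a b x, m ≠ n

/-- The length density of an element `x` of `M_{a,b}`. -/
noncomputable def acmLD (a b x : ℕ) : ℝ :=
  (((acmLengthSet a b x).ncard : ℝ) - 1) /
    (((sSup (acmLengthSet a b x) : ℕ) : ℝ) - ((sInf (acmLengthSet a b x) : ℕ) : ℝ))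


namespace ACMLocal

structure Setup (p a b α β : ℕ) : Prop where
  hp : p.Prime
  ha : 0 < a
  haleb : a ≤ b
  hab : Nat.Coprime a b
  hpa : ¬ p ∣ a
  hpb : ¬ p ∣ b
  hα : 0 < α
  hacm : (a * p ^ α) * (a * p ^ α) ≡ a * p ^ α [MOD b * p ^ α]
  hβ : 0 < β
  hβmem : acmMem (a * p ^ α) (b * p ^ α) (p ^ β)
  hβmin : ∀ γ : ℕ, 0 < γ → γ < β → ¬ acmMem (a * p ^ α) (b * p ^ α) (p ^ γ)
  hαβ : α < β

variable {p a b α β : ℕ}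

theorem Setup.two_le_b (S : Setup p a b α β) : 2 ≤ b := by
  have ha := S.ha
  have hab := S.haleb
  rcases Nat.lt_or_ge b 2 with h | h
  · exfalso
    have hb1 : b = 1 := by omega
    have ha1 : a = 1 := by omega
    have : acmMem (a * p ^ α) (b * p ^ α) (p ^ α) := Or.inr ⟨0, by simp [ha1, hb1]⟩
    exact S.hβmin α S.hα S.hαβ this
  · exact h

theorem Setup.a_lt_b (S : Setup p a b α β) : a < b := by
  rcases Nat.lt_or_ge a b with h | h
  · exact h
  · exfalso
    have hab2 : a = b := le_antisymm S.haleb h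
    have := S.hab
    rw [hab2] at this
    have : b = 1 := by simpa [Nat.Coprime] using this
    have := S.two_le_b; omega

theorem Setup.cop_pb (S : Setup p a b α β) : Nat.Coprime p b :=
  (Nat.Prime.coprime_iff_not_dvd S.hp).2 S.hpb

theorem Setup.cop_Pb (S : Setup p a b α β) : Nat.Coprime (p ^ α) b :=
  Nat.Coprime.pow_left _ S.cop_pb

theorem Setup.cop_Ab (S : Setup p a b α β) : Nat.Coprime (a * p ^ α) b :=
  Nat.Coprime.mul S.hab S.cop_Pb

/-- The ACM condition implies `a p^α ≡ 1 (mod b)`. -/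
theorem Setup.hA1 (S : Setup p a b α β) : a * p ^ α ≡ 1 [MOD b] := by
  have h1 : (a * p ^ α) * (a * p ^ α) ≡ a * p ^ α [MOD b] :=
    Nat.ModEq.of_dvd ⟨p ^ α, rfl⟩ S.hacm
  have h2 : (a * p ^ α) * (a * p ^ α) ≡ (a * p ^ α) * 1 [MOD b] := by
    simpa using h1
  exact Nat.ModEq.cancel_left_of_coprime
    (by simpa [Nat.Coprime] using (Nat.coprime_comm.mp S.cop_Ab)) h2

theorem Setup.mem_iff (S : Setup p a b α β) (x : ℕ) :
    acmMem (a * p ^ α) (b * p ^ α) x ↔ x = 1 ∨ (p ^ α ∣ x ∧ x ≡ 1 [MOD b]) := by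
  constructor
  · rintro (rfl | ⟨k, rfl⟩)
    · exact Or.inl rfl
    · refine Or.inr ⟨⟨a + k * b, by ring⟩, ?_⟩
      have h0 : k * (b * p ^ α) ≡ 0 [MOD b] :=
        (Nat.modEq_zero_iff_dvd).2 ⟨k * p ^ α, by ring⟩
      have h1 := (Nat.ModEq.refl (a * p ^ α)).add h0
      calc a * p ^ α + k * (b * p ^ α) ≡ a * p ^ α + 0 [MOD b] := h1
        _ ≡ 1 [MOD b] := by simpa using S.hA1
  · rintro (rfl | ⟨⟨m, rfl⟩, hmod⟩)
    · exact Or.inl rfl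
    · -- x = p^α * m
      have hb2 := S.two_le_b
      have hx0 : p ^ α * m ≠ 0 := by
        intro h0
        rw [h0] at hmod
        have : (0 : ℕ) % b = 1 % b := hmod
        rw [Nat.zero_mod, Nat.mod_eq_of_lt (by omega)] at this
        omega
      have hm0 : 0 < m := by
        rcases Nat.eq_zero_or_pos m with h | h
        · exact absurd (by simp [h]) hx0
        · exact h
      -- m ≡ a (mod b)
      have h1 : p ^ α * m ≡ p ^ α * a [MOD b] := by
        calc p ^ α * m ≡ 1 [MOD b] := hmod
          _ ≡ a * p ^ α [MOD b] := S.hA1.symm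
          _ = p ^ α * a := by ring
      have hma : m ≡ a [MOD b] :=
        Nat.ModEq.cancel_left_of_coprime
          (by simpa [Nat.Coprime] using (Nat.coprime_comm.mp S.cop_Pb)) h1
      have halb := S.a_lt_b
      have ham : a ≤ m := by
        by_contra hlt
        push_neg at hlt
        have : m % b = a % b := hma
        rw [Nat.mod_eq_of_lt (by omega), Nat.mod_eq_of_lt (by omega)] at this
        omega
      have : b ∣ m - a := (Nat.modEq_iff_dvd' ham).1 hma.symm
      obtain ⟨k, hk⟩ := this
      refine Or.inr ⟨k, ?_⟩
      have hm : m = a + b * k := by omega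
      rw [hm]; ring

theorem Setup.mem_one (S : Setup p a b α β) : acmMem (a * p ^ α) (b * p ^ α) 1 := Or.inl rfl

theorem Setup.mem_mul (S : Setup p a b α β) {x y : ℕ}
    (hx : acmMem (a * p ^ α) (b * p ^ α) x) (hy : acmMem (a * p ^ α) (b * p ^ α) y) :
    acmMem (a * p ^ α) (b * p ^ α) (x * y) := by
  rw [S.mem_iff] at hx hy ⊢
  rcases hx with rfl | ⟨hd, hm⟩
  · simpa using hy
  rcases hy with rfl | ⟨hd', hm'⟩
  · exact Or.inr ⟨by simpa using hd, by simpa using hm⟩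
  · exact Or.inr ⟨Dvd.dvd.mul_right hd y, by simpa using hm.mul hm'⟩

theorem Setup.not_zero_modeq_one (S : Setup p a b α β) : ¬ ((0 : ℕ) ≡ 1 [MOD b]) := by
  intro hm
  have hb2 := S.two_le_b
  have h1 : b ∣ 1 := by
    have := (Nat.modEq_iff_dvd' (by omega : (0:ℕ) ≤ 1)).1 hm
    simpa using this
  have := Nat.le_of_dvd one_pos h1
  omega

theorem Setup.mem_ne_zero (S : Setup p a b α β) {x : ℕ}
    (hx : acmMem (a * p ^ α) (b * p ^ α) x) : x ≠ 0 := by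
  rw [S.mem_iff] at hx
  rcases hx with rfl | ⟨_, hm⟩
  · omega
  · intro h0
    rw [h0] at hm
    exact S.not_zero_modeq_one hm

theorem Setup.two_le_pow_alpha (S : Setup p a b α β) : 2 ≤ p ^ α :=
  le_trans S.hp.two_le (Nat.le_self_pow S.hα.ne' p)

theorem Setup.mem_two_le (S : Setup p a b α β) {x : ℕ}
    (hx : acmMem (a * p ^ α) (b * p ^ α) x) (hx1 : x ≠ 1) : 2 ≤ x := by
  rw [S.mem_iff] at hx
  rcases hx with rfl | ⟨hd, hm⟩
  · omega
  · have hx0 : x ≠ 0 := S.mem_ne_zero (S.mem_iff x |>.2 (Or.inr ⟨hd, hm⟩))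
    have := Nat.le_of_dvd (by omega) hd
    have := S.two_le_pow_alpha
    omega

/-- `p^β ≡ 1 (mod b)`. -/
theorem Setup.hpβ1 (S : Setup p a b α β) : p ^ β ≡ 1 [MOD b] := by
  have h := (S.mem_iff (p ^ β)).1 S.hβmem
  rcases h with h1 | ⟨_, h⟩
  · exfalso
    have : 2 ≤ p ^ β := le_trans S.hp.two_le (Nat.le_self_pow S.hβ.ne' p)
    omega
  · exact h

/-- minimality of β in convenient form. -/
theorem Setup.beta_min (S : Setup p a b α β) {γ : ℕ} (hγ : α ≤ γ) (h1 : p ^ γ ≡ 1 [MOD b]) :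
    β ≤ γ := by
  by_contra hlt
  push_neg at hlt
  have hα := S.hα
  exact S.hβmin γ (by omega) hlt
    ((S.mem_iff _).2 (Or.inr ⟨pow_dvd_pow p hγ, h1⟩))

/-- ceiling arithmetic: `q = ⌈β/α⌉`. -/
theorem Setup.q_spec (S : Setup p a b α β) :
    β ≤ ((β + α - 1) / α) * α ∧ ((β + α - 1) / α) * α < β + α ∧ 2 ≤ (β + α - 1) / α := by
  set q := (β + α - 1) / α with hq
  have h0 : q * α + (β + α - 1) % α = β + α - 1 := by
    rw [hq, mul_comm]; exact Nat.div_add_mod _ _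
  have h1 : (β + α - 1) % α < α := Nat.mod_lt _ S.hα
  have hβα := S.hαβ
  have hα := S.hα
  set e := (β + α - 1) % α with he
  clear_value e
  have hq1 : β ≤ q * α := by omega
  have hq2 : q * α < β + α := by omega
  refine ⟨hq1, hq2, ?_⟩
  rcases Nat.lt_or_ge q 2 with h2 | h2
  · exfalso
    interval_cases q
    · simp only [zero_mul] at hq1; omega
    · simp only [one_mul] at hq1; omega
  · exact h2

end ACMLocal

-- appended to part1
namespace ACMLocal

variable {p a b α β : ℕ}

/-- p-adic valuation -/
def vp (p x : ℕ) : ℕ := x.factorization p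

theorem vp_mul (hp : p.Prime) {x y : ℕ} (hx : x ≠ 0) (hy : y ≠ 0) :
    vp p (x * y) = vp p x + vp p y := by
  unfold vp
  rw [Nat.factorization_mul hx hy]
  simp

theorem vp_pow (hp : p.Prime) (k : ℕ) : vp p (p ^ k) = k := by
  unfold vp
  rw [hp.factorization_pow]
  simp

theorem vp_one : vp p 1 = 0 := by unfold vp; simp

theorem vp_pow_dvd_iff (hp : p.Prime) {x : ℕ} (hx : x ≠ 0) (k : ℕ) :
    p ^ k ∣ x ↔ k ≤ vp p x := hp.pow_dvd_iff_le_factorization hx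

theorem vp_prod (hp : p.Prime) (z : Multiset ℕ) (hz : ∀ u ∈ z, u ≠ 0) :
    vp p z.prod = (z.map (vp p)).sum := by
  induction z using Multiset.induction with
  | empty => simp [vp]
  | cons u s ih =>
    rw [Multiset.prod_cons, Multiset.map_cons, Multiset.sum_cons,
      vp_mul hp (hz u (Multiset.mem_cons_self u s)) ?_, ih ?_]
    · intro w hw; exact hz w (Multiset.mem_cons_of_mem hw)
    · intro h0
      have : (0 : ℕ) ∈ s := by
        have hpr : s.prod = 0 := h0
        exact Multiset.prod_eq_zero_iff.1 hpr
      exact hz 0 (Multiset.mem_cons_of_mem this) rfl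

theorem sum_card_mul_le (s : Multiset ℕ) (c : ℕ) (h : ∀ u ∈ s, c ≤ u) :
    Multiset.card s * c ≤ s.sum := by
  induction s using Multiset.induction with
  | empty => simp
  | cons u t ih =>
    rw [Multiset.sum_cons, Multiset.card_cons, add_mul, one_mul]
    have h1 := h u (Multiset.mem_cons_self u t)
    have h2 := ih (fun w hw => h w (Multiset.mem_cons_of_mem hw))
    omega

theorem exists_min_vp (z : Multiset ℕ) (hz : z ≠ 0) :
    ∃ B ∈ z, ∀ u ∈ z, vp p B ≤ vp p u := by
  induction z using Multiset.induction with
  | empty => exact absurd rfl hz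
  | cons u s ih =>
    rcases Multiset.empty_or_exists_mem s with rfl | ⟨w, hw⟩
    · exact ⟨u, Multiset.mem_cons_self u 0, by
        intro x hx
        rcases Multiset.mem_cons.1 hx with rfl | h
        · exact le_rfl
        · simp at h⟩
    · obtain ⟨B, hB, hBmin⟩ := ih (by
        intro h0; rw [h0] at hw; simp at hw)
      rcases Nat.le_total (vp p u) (vp p B) with hle | hle
      · refine ⟨u, Multiset.mem_cons_self u s, ?_⟩
        intro x hx
        rcases Multiset.mem_cons.1 hx with rfl | h
        · exact le_rfl
        · exact le_trans hle (hBmin x h)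
      · refine ⟨B, Multiset.mem_cons_of_mem hB, ?_⟩
        intro x hx
        rcases Multiset.mem_cons.1 hx with rfl | h
        · exact hle
        · exact hBmin x h

/-- membership and p-adic valuation -/
theorem Setup.mem_vp_ge (S : Setup p a b α β) {x : ℕ}
    (hx : acmMem (a * p ^ α) (b * p ^ α) x) (hx1 : x ≠ 1) : α ≤ vp p x := by
  rw [S.mem_iff] at hx
  rcases hx with rfl | ⟨hd, hm⟩
  · omega
  · rw [← vp_pow_dvd_iff S.hp (S.mem_ne_zero ((S.mem_iff x).2 (Or.inr ⟨hd, hm⟩)))]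
    exact hd

theorem Setup.mem_mod_one (S : Setup p a b α β) {x : ℕ}
    (hx : acmMem (a * p ^ α) (b * p ^ α) x) : x ≡ 1 [MOD b] := by
  rw [S.mem_iff] at hx
  rcases hx with rfl | ⟨_, hm⟩
  · rfl
  · exact hm

/-- if c * y = x with x ≡ 1, y ≡ 1 then c ≡ 1 -/
theorem modeq_one_cancel {b c y x : ℕ} (hx : x ≡ 1 [MOD b]) (hy : y ≡ 1 [MOD b])
    (h : c * y = x) : c ≡ 1 [MOD b] := by
  calc c ≡ c * 1 [MOD b] := by rw [mul_one]
    _ ≡ c * y [MOD b] := (Nat.ModEq.mul_left c hy).symm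
    _ = x := h
    _ ≡ 1 [MOD b] := hx

/-- dividing out a power of p^β-type factor: general membership of cofactors. -/
theorem Setup.mem_cofactor (S : Setup p a b α β) {x y c : ℕ}
    (hx : acmMem (a * p ^ α) (b * p ^ α) x) (hy : y ≡ 1 [MOD b]) (h : c * y = x)
    (hc : p ^ α ∣ c) : acmMem (a * p ^ α) (b * p ^ α) c := by
  exact (S.mem_iff c).2 (Or.inr ⟨hc, modeq_one_cancel (S.mem_mod_one hx) hy h⟩)

/-- Atoms -/
theorem Setup.atom_mem (S : Setup p a b α β) {u : ℕ}
    (hu : acmAtom (a * p ^ α) (b * p ^ α) u) : acmMem (a * p ^ α) (b * p ^ α) u := hu.1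

theorem Setup.atom_ne_one {u : ℕ}
    (hu : acmAtom (a * p ^ α) (b * p ^ α) u) : u ≠ 1 := hu.2.1

theorem Setup.atom_ne_zero (S : Setup p a b α β) {u : ℕ}
    (hu : acmAtom (a * p ^ α) (b * p ^ α) u) : u ≠ 0 := S.mem_ne_zero hu.1

theorem Setup.atom_vp_ge (S : Setup p a b α β) {u : ℕ}
    (hu : acmAtom (a * p ^ α) (b * p ^ α) u) : α ≤ vp p u :=
  S.mem_vp_ge hu.1 hu.2.1

theorem Setup.atom_two_le (S : Setup p a b α β) {u : ℕ}
    (hu : acmAtom (a * p ^ α) (b * p ^ α) u) : 2 ≤ u := S.mem_two_le hu.1 hu.2.1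

/-- An element of M which is not 1 and has valuation < 2α is an atom. -/
theorem Setup.atom_of_small (S : Setup p a b α β) {u : ℕ}
    (hu : acmMem (a * p ^ α) (b * p ^ α) u) (hu1 : u ≠ 1) (hv : vp p u < 2 * α) :
    acmAtom (a * p ^ α) (b * p ^ α) u := by
  refine ⟨hu, hu1, ?_⟩
  intro y z hy hz huyz
  by_contra hcon
  push_neg at hcon
  obtain ⟨hy1, hz1⟩ := hcon
  have hy0 : y ≠ 0 := S.mem_ne_zero hy
  have hz0 : z ≠ 0 := S.mem_ne_zero hz
  have h1 : vp p u = vp p y + vp p z := by rw [huyz]; exact vp_mul S.hp hy0 hz0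
  have h2 := S.mem_vp_ge hy hy1
  have h3 := S.mem_vp_ge hz hz1
  omega

/-- Atoms have valuation < α + β. -/
theorem Setup.atom_vp_lt (S : Setup p a b α β) {u : ℕ}
    (hu : acmAtom (a * p ^ α) (b * p ^ α) u) : vp p u < α + β := by
  by_contra hge
  push_neg at hge
  have hu0 : u ≠ 0 := S.atom_ne_zero hu
  have hdvd : p ^ β ∣ u := (vp_pow_dvd_iff S.hp hu0 β).2 (by omega)
  obtain ⟨c, hc⟩ := hdvd
  have hc0 : c ≠ 0 := by rintro rfl; simp at hc; exact hu0 hc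
  have hvc : vp p u = β + vp p c := by
    rw [hc, vp_mul S.hp (pow_pos S.hp.pos β).ne' hc0, vp_pow S.hp]
  have hcP : p ^ α ∣ c := (vp_pow_dvd_iff S.hp hc0 α).2 (by omega)
  have hcmem : acmMem (a * p ^ α) (b * p ^ α) c :=
    S.mem_cofactor hu.1 S.hpβ1 (by rw [mul_comm]; exact hc.symm) hcP
  have hpβmem := S.hβmem
  have := hu.2.2 (p ^ β) c hpβmem hcmem hc
  rcases this with h1 | h1
  · have : 2 ≤ p ^ β := le_trans S.hp.two_le (Nat.le_self_pow S.hβ.ne' p)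
    omega
  · rw [h1, vp_one] at hvc
    have := S.hα
    omega

/-- p^β is an atom. -/
theorem Setup.atom_pβ (S : Setup p a b α β) : acmAtom (a * p ^ α) (b * p ^ α) (p ^ β) := by
  have h2 : 2 ≤ p ^ β := le_trans S.hp.two_le (Nat.le_self_pow S.hβ.ne' p)
  refine ⟨S.hβmem, by omega, ?_⟩
  intro y z hy hz h
  by_contra hcon
  push_neg at hcon
  obtain ⟨hy1, hz1⟩ := hcon
  -- y ∣ p^β hence y = p^i
  have hydvd : y ∣ p ^ β := Dvd.intro z h.symm
  obtain ⟨i, hi, rfl⟩ := (Nat.dvd_prime_pow S.hp).1 hydvd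
  have hzdvd : z ∣ p ^ β := Dvd.intro_left _ h.symm
  obtain ⟨j, hj, rfl⟩ := (Nat.dvd_prime_pow S.hp).1 hzdvd
  have hij : i + j = β := by
    have := h
    rw [← pow_add] at this
    exact (Nat.pow_right_injective S.hp.two_le this.symm).symm ▸ rfl
  have hi0 : i ≠ 0 := by rintro rfl; simp at hy1
  have hj0 : j ≠ 0 := by rintro rfl; simp at hz1
  -- y ∈ M and y ≠ 1 gives β ≤ i
  have : α ≤ i := by
    have := S.mem_vp_ge hy hy1
    rwa [vp_pow S.hp] at this
  have hi1 : p ^ i ≡ 1 [MOD b] := S.mem_mod_one hy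
  have := S.beta_min this hi1
  omega

end ACMLocal

namespace ACMLocal

variable {p a b α β : ℕ}

theorem Setup.prod_mem (S : Setup p a b α β) (z : Multiset ℕ)
    (hz : ∀ u ∈ z, acmAtom (a * p ^ α) (b * p ^ α) u) :
    acmMem (a * p ^ α) (b * p ^ α) z.prod := by
  induction z using Multiset.induction with
  | empty => exact S.mem_one
  | cons u s ih =>
    rw [Multiset.prod_cons]
    exact S.mem_mul (hz u (Multiset.mem_cons_self u s)).1
      (ih (fun w hw => hz w (Multiset.mem_cons_of_mem hw)))

theorem Setup.fact_mem (S : Setup p a b α β) {x : ℕ} {z : Multiset ℕ}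
    (hz : acmFactorization (a * p ^ α) (b * p ^ α) x z) :
    acmMem (a * p ^ α) (b * p ^ α) x := by
  rw [← hz.2]; exact S.prod_mem z hz.1

theorem Setup.fact_vp (S : Setup p a b α β) {x : ℕ} {z : Multiset ℕ}
    (hz : acmFactorization (a * p ^ α) (b * p ^ α) x z) :
    vp p x = (z.map (vp p)).sum := by
  rw [← hz.2]
  exact vp_prod S.hp z (fun u hu => S.atom_ne_zero (hz.1 u hu))

theorem Setup.fact_card_le (S : Setup p a b α β) {x : ℕ} {z : Multiset ℕ}
    (hz : acmFactorization (a * p ^ α) (b * p ^ α) x z) :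
    Multiset.card z * α ≤ vp p x := by
  rw [S.fact_vp hz]
  have : Multiset.card (z.map (vp p)) * α ≤ (z.map (vp p)).sum := by
    apply sum_card_mul_le
    intro u hu
    obtain ⟨w, hw, rfl⟩ := Multiset.mem_map.1 hu
    exact S.atom_vp_ge (hz.1 w hw)
  simpa using this

/-- every element of M has a factorization into atoms -/
theorem Setup.exists_fact (S : Setup p a b α β) :
    ∀ y, acmMem (a * p ^ α) (b * p ^ α) y →
      ∃ G : Multiset ℕ, acmFactorization (a * p ^ α) (b * p ^ α) y G := by
  intro y
  induction y using Nat.strong_induction_on with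
  | _ y IH =>
    intro hy
    by_cases hy1 : y = 1
    · exact ⟨0, by simp, by simp [hy1]⟩
    by_cases hat : acmAtom (a * p ^ α) (b * p ^ α) y
    · exact ⟨{y}, by
        intro u hu
        rw [Multiset.mem_singleton] at hu
        rwa [hu], by simp⟩
    · have : ¬ (∀ y₁ z₁ : ℕ, acmMem (a * p ^ α) (b * p ^ α) y₁ →
          acmMem (a * p ^ α) (b * p ^ α) z₁ → y = y₁ * z₁ → y₁ = 1 ∨ z₁ = 1) := by
        intro h
        exact hat ⟨hy, hy1, h⟩
      push_neg at this
      obtain ⟨y₁, z₁, hy₁, hz₁, hprod, hy₁1, hz₁1⟩ := this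
      have h2y : 2 ≤ y₁ := S.mem_two_le hy₁ hy₁1
      have h2z : 2 ≤ z₁ := S.mem_two_le hz₁ hz₁1
      have hylt : y₁ < y := by nlinarith
      have hzlt : z₁ < y := by nlinarith
      obtain ⟨G₁, hG₁⟩ := IH y₁ hylt hy₁
      obtain ⟨G₂, hG₂⟩ := IH z₁ hzlt hz₁
      refine ⟨G₁ + G₂, ?_, ?_⟩
      · intro u hu
        rcases Multiset.mem_add.1 hu with h | h
        · exact hG₁.1 u h
        · exact hG₂.1 u h
      · rw [Multiset.prod_add, hG₁.2, hG₂.2, hprod]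

/- ----------------- chain machinery ----------------- -/

theorem facDist_comm (s t : Multiset ℕ) : facDist s t = facDist t s := by
  unfold facDist; exact max_comm _ _

theorem facDist_le_max_card (s t : Multiset ℕ) :
    facDist s t ≤ max (Multiset.card s) (Multiset.card t) := by
  unfold facDist
  apply max_le_max
  · exact Multiset.card_le_card (tsub_le_self)
  · exact Multiset.card_le_card (tsub_le_self)

theorem facDist_cons (u : ℕ) (s t : Multiset ℕ) :
    facDist (u ::ₘ s) (u ::ₘ t) = facDist s t := by
  unfold facDist
  rw [Multiset.sub_cons, Multiset.erase_cons_head, Multiset.sub_cons, Multiset.erase_cons_head]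

theorem facDist_self (s : Multiset ℕ) : facDist s s = 0 := by
  unfold facDist
  simp

section Chains

variable {A B : ℕ}

theorem nchain_single {x N : ℕ} {z : Multiset ℕ}
    (hz : acmFactorization A B x z) : acmNChain A B x N z z := by
  refine ⟨[z], by simp, by simp, by simp, by simpa using hz, by simp [List.Chain']⟩

theorem nchain_pair {x N : ℕ} {z z' : Multiset ℕ}
    (hz : acmFactorization A B x z) (hz' : acmFactorization A B x z')
    (hd : facDist z z' ≤ N) : acmNChain A B x N z z' := by
  refine ⟨[z, z'], by simp, by simp, by simp, ?_, ?_⟩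
  · intro w hw
    have : w = z ∨ w = z' := by simpa using hw
    rcases this with rfl | rfl
    · exact hz
    · exact hz'
  · simpa [List.Chain'] using hd

theorem nchain_symm {x N : ℕ} {z z' : Multiset ℕ}
    (h : acmNChain A B x N z z') : acmNChain A B x N z' z := by
  obtain ⟨L, hne, hhead, hlast, hfact, hchain⟩ := h
  refine ⟨L.reverse, by simpa using hne, ?_, ?_, ?_, ?_⟩
  · rwa [List.head?_reverse]
  · rwa [List.getLast?_reverse]
  · intro w hw; exact hfact w (List.mem_reverse.1 hw)
  · simp only [List.Chain']
    rw [List.isChain_reverse]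
    apply hchain.imp
    intro s t h
    show facDist t s ≤ N
    rw [facDist_comm]
    exact h

theorem nchain_trans {x N : ℕ} {z₁ z₂ z₃ : Multiset ℕ}
    (h1 : acmNChain A B x N z₁ z₂) (h2 : acmNChain A B x N z₂ z₃) :
    acmNChain A B x N z₁ z₃ := by
  obtain ⟨L₁, hne₁, hhead₁, hlast₁, hfact₁, hchain₁⟩ := h1
  obtain ⟨L₂, hne₂, hhead₂, hlast₂, hfact₂, hchain₂⟩ := h2
  refine ⟨L₁ ++ L₂, by simp [hne₁], ?_, ?_, ?_, ?_⟩
  · rwa [List.head?_append_of_ne_nil _ hne₁]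
  · rwa [List.getLast?_append_of_ne_nil _ hne₂]
  · intro w hw
    rcases List.mem_append.1 hw with h | h
    · exact hfact₁ w h
    · exact hfact₂ w h
  · simp only [List.Chain']
    rw [List.isChain_append]
    refine ⟨hchain₁, hchain₂, ?_⟩
    intro s hs t ht
    rw [hlast₁] at hs
    rw [hhead₂] at ht
    simp at hs ht
    rw [← hs, ← ht, facDist_self]
    exact Nat.zero_le N

theorem nchain_lift {x N u : ℕ} {z₁ z₂ : Multiset ℕ}
    (hu : acmAtom A B u) (h : acmNChain A B x N z₁ z₂) :
    acmNChain A B (u * x) N (u ::ₘ z₁) (u ::ₘ z₂) := by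
  obtain ⟨L, hne, hhead, hlast, hfact, hchain⟩ := h
  refine ⟨L.map (fun s => u ::ₘ s), by simpa using hne, ?_, ?_, ?_, ?_⟩
  · rw [List.head?_map, hhead]; rfl
  · rw [List.getLast?_map, hlast]; rfl
  · intro w hw
    obtain ⟨s, hs, rfl⟩ := List.mem_map.1 hw
    obtain ⟨hf1, hf2⟩ := hfact s hs
    refine ⟨?_, ?_⟩
    · intro w' hw'
      rcases Multiset.mem_cons.1 hw' with rfl | h
      · exact hu
      · exact hf1 w' h
    · rw [Multiset.prod_cons, hf2]
  · simp only [List.Chain']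
    rw [List.isChain_map]
    apply hchain.imp
    intro s t h
    rwa [facDist_cons]

end Chains

end ACMLocal

namespace ACMLocal

variable {p a b α β : ℕ}

/-- connect two factorizations sharing an atom, given the induction hypothesis. -/
theorem Setup.conn_shared (S : Setup p a b α β) {x N u : ℕ} {z z' : Multiset ℕ}
    (IH : ∀ m, m < x → ∀ w w', acmFactorization (a * p ^ α) (b * p ^ α) m w →
      acmFactorization (a * p ^ α) (b * p ^ α) m w' → acmNChain (a * p ^ α) (b * p ^ α) m N w w')
    (hz : acmFactorization (a * p ^ α) (b * p ^ α) x z)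
    (hz' : acmFactorization (a * p ^ α) (b * p ^ α) x z')
    (hu : u ∈ z) (hu' : u ∈ z') : acmNChain (a * p ^ α) (b * p ^ α) x N z z' := by
  have huA : acmAtom (a * p ^ α) (b * p ^ α) u := hz.1 u hu
  set z₀ := z.erase u with hz₀
  set z₀' := z'.erase u with hz₀'
  have hze : u ::ₘ z₀ = z := Multiset.cons_erase hu
  have hze' : u ::ₘ z₀' = z' := Multiset.cons_erase hu'
  set y := z₀.prod with hy
  have hxy : x = u * y := by
    rw [← hz.2, ← hze, Multiset.prod_cons]
  have hfz₀ : acmFactorization (a * p ^ α) (b * p ^ α) y z₀ :=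
    ⟨fun w hw => hz.1 w (Multiset.mem_of_mem_erase hw), rfl⟩
  have hy' : z₀'.prod = y := by
    have h1 : u * z₀'.prod = u * y := by
      rw [← Multiset.prod_cons, hze', hz'.2, hxy]
    exact Nat.eq_of_mul_eq_mul_left (by have := S.atom_two_le huA; omega) h1
  have hfz₀' : acmFactorization (a * p ^ α) (b * p ^ α) y z₀' :=
    ⟨fun w hw => hz'.1 w (Multiset.mem_of_mem_erase hw), hy'⟩
  have hy0 : y ≠ 0 := S.mem_ne_zero (S.fact_mem hfz₀)
  have hylt : y < x := by
    rw [hxy]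
    have h2 := S.atom_two_le huA
    nlinarith [Nat.pos_of_ne_zero hy0]
  have hchain := IH y hylt z₀ z₀' hfz₀ hfz₀'
  have := nchain_lift huA hchain
  rw [← hxy] at this
  rwa [hze, hze'] at this

/-- hop: insert the atom p^β into a factorization, keeping a designated atom B. -/
theorem Setup.hop (S : Setup p a b α β) {x N B : ℕ} {z : Multiset ℕ}
    (IH : ∀ m, m < x → ∀ w w', acmFactorization (a * p ^ α) (b * p ^ α) m w →
      acmFactorization (a * p ^ α) (b * p ^ α) m w' → acmNChain (a * p ^ α) (b * p ^ α) m N w w')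
    (hz : acmFactorization (a * p ^ α) (b * p ^ α) x z)
    (hB : B ∈ z) (hcond : α + β + vp p B ≤ vp p x) :
    ∃ zs : Multiset ℕ, acmFactorization (a * p ^ α) (b * p ^ α) x zs ∧ p ^ β ∈ zs ∧
      acmNChain (a * p ^ α) (b * p ^ α) x N z zs := by
  have hBA : acmAtom (a * p ^ α) (b * p ^ α) B := hz.1 B hB
  set Sm := z.erase B with hSm
  have hze : B ::ₘ Sm = z := Multiset.cons_erase hB
  set y := Sm.prod with hy
  have hxy : x = B * y := by rw [← hz.2, ← hze, Multiset.prod_cons]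
  have hfSm : acmFactorization (a * p ^ α) (b * p ^ α) y Sm :=
    ⟨fun w hw => hz.1 w (Multiset.mem_of_mem_erase hw), rfl⟩
  have hymem := S.fact_mem hfSm
  have hy0 : y ≠ 0 := S.mem_ne_zero hymem
  have hB0 : B ≠ 0 := S.atom_ne_zero hBA
  have hx0 : x ≠ 0 := by rw [hxy]; exact Nat.mul_ne_zero hB0 hy0
  have hvxy : vp p x = vp p B + vp p y := by rw [hxy]; exact vp_mul S.hp hB0 hy0
  have hvy : α + β ≤ vp p y := by omega
  have hdvd : p ^ β ∣ y := (vp_pow_dvd_iff S.hp hy0 β).2 (by omega)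
  obtain ⟨c, hc⟩ := hdvd
  have hc0 : c ≠ 0 := by rintro rfl; simp at hc; exact hy0 hc
  have hvc : vp p y = β + vp p c := by
    rw [hc, vp_mul S.hp (pow_pos S.hp.pos β).ne' hc0, vp_pow S.hp]
  have hcP : p ^ α ∣ c := (vp_pow_dvd_iff S.hp hc0 α).2 (by omega)
  have hcmem : acmMem (a * p ^ α) (b * p ^ α) c :=
    S.mem_cofactor hymem S.hpβ1 (by rw [mul_comm]; exact hc.symm) hcP
  obtain ⟨G, hG⟩ := S.exists_fact c hcmem
  have hF : acmFactorization (a * p ^ α) (b * p ^ α) y (p ^ β ::ₘ G) := by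
    constructor
    · intro w hw
      rcases Multiset.mem_cons.1 hw with rfl | h
      · exact S.atom_pβ
      · exact hG.1 w h
    · rw [Multiset.prod_cons, hG.2, hc]
  have hylt : y < x := by
    rw [hxy]
    have h2 := S.atom_two_le hBA
    nlinarith [Nat.pos_of_ne_zero hy0]
  have hchain := IH y hylt Sm (p ^ β ::ₘ G) hfSm hF
  have hlift := nchain_lift hBA hchain
  rw [← hxy] at hlift
  rw [hze] at hlift
  refine ⟨B ::ₘ p ^ β ::ₘ G, ?_, ?_, hlift⟩
  · constructor
    · intro w hw
      rcases Multiset.mem_cons.1 hw with rfl | h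
      · exact hBA
      · exact hF.1 w h
    · rw [Multiset.prod_cons, hF.2, ← hxy]
  · exact Multiset.mem_cons_of_mem (Multiset.mem_cons_self _ _)

/-- the small factorization containing p^β when vp x is in the tight range. -/
theorem Setup.small_fact (S : Setup p a b α β) {x : ℕ}
    (hx : acmMem (a * p ^ α) (b * p ^ α) x)
    (hlow : ((β + α - 1) / α + 2) * α ≤ vp p x)
    (hhigh : vp p x + 2 ≤ 2 * α + 2 * β) :
    ∃ w : Multiset ℕ, acmFactorization (a * p ^ α) (b * p ^ α) x w ∧ p ^ β ∈ w ∧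
      Multiset.card w ≤ (β + α - 1) / α + 1 := by
  obtain ⟨hq1, hq2, hq3⟩ := S.q_spec
  set q := (β + α - 1) / α with hqdef
  have hα := S.hα
  have hx0 : x ≠ 0 := S.mem_ne_zero hx
  have hβα := S.hαβ
  have hqα : (q + 2) * α = q * α + 2 * α := by ring
  by_cases hk2 : α + 2 * β ≤ vp p x
  · -- two pure atoms
    have hdvd : p ^ β * p ^ β ∣ x := by
      rw [← pow_add]
      exact (vp_pow_dvd_iff S.hp hx0 (β + β)).2 (by omega)
    obtain ⟨c, hc⟩ := hdvd
    have hc0 : c ≠ 0 := by rintro rfl; simp at hc; exact hx0 hc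
    have hpβ0 : p ^ β ≠ 0 := (pow_pos S.hp.pos β).ne'
    have hvc : vp p x = (β + β) + vp p c := by
      rw [hc, vp_mul S.hp (Nat.mul_ne_zero hpβ0 hpβ0) hc0, vp_mul S.hp hpβ0 hpβ0,
        vp_pow S.hp]
    have hcP : p ^ α ∣ c := (vp_pow_dvd_iff S.hp hc0 α).2 (by omega)
    have hmm : (p ^ β) * (p ^ β) ≡ 1 [MOD b] := by
      have := S.hpβ1.mul S.hpβ1
      simpa using this
    have hcmem : acmMem (a * p ^ α) (b * p ^ α) c :=
      S.mem_cofactor hx hmm (by rw [mul_comm]; exact hc.symm) hcP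
    have hc1 : c ≠ 1 := by
      intro h1; rw [h1, vp_one] at hvc; omega
    have hcatom : acmAtom (a * p ^ α) (b * p ^ α) c :=
      S.atom_of_small hcmem hc1 (by omega)
    refine ⟨p ^ β ::ₘ p ^ β ::ₘ {c}, ⟨?_, ?_⟩, Multiset.mem_cons_self _ _, ?_⟩
    · intro w hw
      rcases Multiset.mem_cons.1 hw with rfl | hw
      · exact S.atom_pβ
      rcases Multiset.mem_cons.1 hw with rfl | hw
      · exact S.atom_pβ
      · rw [Multiset.mem_singleton] at hw; rwa [hw]
    · simp only [Multiset.prod_cons, Multiset.prod_singleton]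
      rw [← mul_assoc, ← hc]
    · simp only [Multiset.card_cons, Multiset.card_singleton]
      omega
  · -- one pure atom
    push_neg at hk2
    have hdvd : p ^ β ∣ x := (vp_pow_dvd_iff S.hp hx0 β).2 (by omega)
    obtain ⟨c, hc⟩ := hdvd
    have hc0 : c ≠ 0 := by rintro rfl; simp at hc; exact hx0 hc
    have hvc : vp p x = β + vp p c := by
      rw [hc, vp_mul S.hp (pow_pos S.hp.pos β).ne' hc0, vp_pow S.hp]
    have hcP : p ^ α ∣ c := (vp_pow_dvd_iff S.hp hc0 α).2 (by omega)
    have hcmem : acmMem (a * p ^ α) (b * p ^ α) c :=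
      S.mem_cofactor hx S.hpβ1 (by rw [mul_comm]; exact hc.symm) hcP
    obtain ⟨G, hG⟩ := S.exists_fact c hcmem
    have hcard : Multiset.card G * α ≤ vp p c := S.fact_card_le hG
    have hcardq : Multiset.card G ≤ q := by
      by_contra hcon
      push_neg at hcon
      have : (q + 1) * α ≤ Multiset.card G * α := Nat.mul_le_mul_right _ (by omega)
      have hq1' : (q + 1) * α = q * α + α := by ring
      omega
    refine ⟨p ^ β ::ₘ G, ⟨?_, ?_⟩, Multiset.mem_cons_self _ _, ?_⟩
    · intro w hw
      rcases Multiset.mem_cons.1 hw with rfl | hw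
      · exact S.atom_pβ
      · exact hG.1 w hw
    · rw [Multiset.prod_cons, hG.2, ← hc]
    · simp only [Multiset.card_cons]
      omega

end ACMLocal

namespace ACMLocal

variable {p a b α β : ℕ}

/-- the "big factorization" case of the main theorem. -/
theorem Setup.big_case (S : Setup p a b α β) {x : ℕ} {z z' : Multiset ℕ}
    (IH : ∀ m, m < x → ∀ w w', acmFactorization (a * p ^ α) (b * p ^ α) m w →
      acmFactorization (a * p ^ α) (b * p ^ α) m w' →
      acmNChain (a * p ^ α) (b * p ^ α) m ((β + α - 1) / α + 1) w w')
    (hz : acmFactorization (a * p ^ α) (b * p ^ α) x z)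
    (hz' : acmFactorization (a * p ^ α) (b * p ^ α) x z')
    (hbig : (β + α - 1) / α + 2 ≤ Multiset.card z) :
    acmNChain (a * p ^ α) (b * p ^ α) x ((β + α - 1) / α + 1) z z' := by
  obtain ⟨hq1, hq2, hq3⟩ := S.q_spec
  set q := (β + α - 1) / α with hqdef
  set N := q + 1 with hN
  have hα := S.hα
  have hβα := S.hαβ
  -- z is nonempty
  have hzne : z ≠ 0 := by
    intro h0; rw [h0] at hbig; simp at hbig
  -- the minimal-valuation atom of z
  obtain ⟨B, hB, hBmin⟩ := exists_min_vp z hzne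
  have hvBα : α ≤ vp p B := S.atom_vp_ge (hz.1 B hB)
  -- card z * vp B ≤ vp x
  have hsum : Multiset.card z * vp p B ≤ vp p x := by
    rw [S.fact_vp hz]
    have := sum_card_mul_le (z.map (vp p)) (vp p B) (by
      intro u hu
      obtain ⟨w, hw, rfl⟩ := Multiset.mem_map.1 hu
      exact hBmin w hw)
    simpa using this
  have hcond : α + β + vp p B ≤ vp p x := by
    calc α + β + vp p B ≤ α + q * α + vp p B := by omega
      _ = (q + 1) * α + vp p B := by ring
      _ ≤ (q + 1) * vp p B + vp p B := by
          have := Nat.mul_le_mul_left (q + 1) hvBα; omega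
      _ = (q + 2) * vp p B := by ring
      _ ≤ Multiset.card z * vp p B := Nat.mul_le_mul_right _ hbig
      _ ≤ vp p x := hsum
  -- hop z into a p^β-containing factorization
  obtain ⟨z₁, hz₁, hpβz₁, hchain₁⟩ := S.hop IH hz hB hcond
  -- lower bound on vp x
  have hvxlow : (q + 2) * α ≤ vp p x := by
    calc (q + 2) * α ≤ Multiset.card z * α := Nat.mul_le_mul_right _ hbig
      _ ≤ vp p x := S.fact_card_le hz
  -- x is not 1 and not an atom; z' has at least 2 elements
  have hx0 : x ≠ 0 := S.mem_ne_zero (S.fact_mem hz)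
  have hvx_pos : α + β + α ≤ vp p x := by
    have : (q + 2) * α = q * α + 2 * α := by ring
    omega
  have hz'ne : z' ≠ 0 := by
    intro h0
    have hx1 : x = 1 := by rw [← hz'.2, h0]; simp
    rw [hx1, vp_one] at hvx_pos
    omega
  have hz'2 : 2 ≤ Multiset.card z' := by
    rcases Nat.lt_or_ge (Multiset.card z') 2 with hlt | h
    · exfalso
      have h1 : Multiset.card z' = 1 := by
        have := Multiset.card_pos.2 (by
          exact Multiset.exists_mem_of_ne_zero hz'ne |>.imp (fun _ h => h) |> fun _ => by
            exact Multiset.card_pos.1 (by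
              rcases Multiset.exists_mem_of_ne_zero hz'ne with ⟨w, hw⟩
              exact Multiset.card_pos_iff_exists_mem.2 ⟨w, hw⟩))
        omega
      obtain ⟨u, hu⟩ := Multiset.card_eq_one.1 h1
      have hxu : x = u := by rw [← hz'.2, hu]; simp
      have hxatom : acmAtom (a * p ^ α) (b * p ^ α) x := by
        rw [hxu]; exact hz'.1 u (by rw [hu]; simp)
      have := S.atom_vp_lt hxatom
      omega
    · exact h
  obtain ⟨B', hB', hB'min⟩ := exists_min_vp z' hz'ne
  have hvB'α : α ≤ vp p B' := S.atom_vp_ge (hz'.1 B' hB')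
  by_cases hcond' : α + β + vp p B' ≤ vp p x
  · -- both sides hop to p^β-factorizations
    obtain ⟨z₂, hz₂, hpβz₂, hchain₂⟩ := S.hop IH hz' hB' hcond'
    have hmid := S.conn_shared IH hz₁ hz₂ hpβz₁ hpβz₂
    exact nchain_trans (nchain_trans hchain₁ hmid) (nchain_symm hchain₂)
  · push_neg at hcond'
    -- tight range: vp x ≤ 2α + 2β - 2 and card z' ≤ q + 1
    have hvB'ub : vp p B' < α + β := S.atom_vp_lt (hz'.1 B' hB')
    have hvx_ub : vp p x + 2 ≤ 2 * α + 2 * β := by omega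
    have hcardz' : Multiset.card z' ≤ q + 1 := by
      by_contra hcon
      push_neg at hcon
      have hsum' : Multiset.card z' * vp p B' ≤ vp p x := by
        rw [S.fact_vp hz']
        have := sum_card_mul_le (z'.map (vp p)) (vp p B') (by
          intro u hu
          obtain ⟨w, hw, rfl⟩ := Multiset.mem_map.1 hu
          exact hB'min w hw)
        simpa using this
      have h1 : (q + 2) * vp p B' ≤ Multiset.card z' * vp p B' :=
        Nat.mul_le_mul_right _ (by omega)
      have h2 : (q + 1) * α ≤ (q + 1) * vp p B' := Nat.mul_le_mul_left _ hvB'α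
      have h3 : (q + 2) * vp p B' = (q + 1) * vp p B' + vp p B' := by ring
      have h4 : (q + 1) * α = q * α + α := by ring
      omega
    -- the small p^β-factorization
    obtain ⟨w, hw, hpβw, hcardw⟩ := S.small_fact (S.fact_mem hz) (by
      rw [← hqdef]
      calc (q + 2) * α ≤ Multiset.card z * α := Nat.mul_le_mul_right _ hbig
        _ ≤ vp p x := S.fact_card_le hz) hvx_ub
    have hmid := S.conn_shared IH hz₁ hw hpβz₁ hpβw
    have hlast : acmNChain (a * p ^ α) (b * p ^ α) x N w z' := by
      apply nchain_pair hw hz'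
      calc facDist w z' ≤ max (Multiset.card w) (Multiset.card z') := facDist_le_max_card _ _
        _ ≤ N := by omega
    exact nchain_trans (nchain_trans hchain₁ hmid) hlast

/-- THE UPPER BOUND: any two factorizations are connected by a (q+1)-chain. -/
theorem Setup.upper (S : Setup p a b α β) :
    ∀ x z z', acmFactorization (a * p ^ α) (b * p ^ α) x z →
      acmFactorization (a * p ^ α) (b * p ^ α) x z' →
      acmNChain (a * p ^ α) (b * p ^ α) x ((β + α - 1) / α + 1) z z' := by
  intro x
  induction x using Nat.strong_induction_on with
  | _ x IH =>
    intro z z' hz hz'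
    set q := (β + α - 1) / α with hqdef
    obtain ⟨hq1, hq2, hq3⟩ := S.q_spec
    rw [← hqdef] at hq1 hq2 hq3
    by_cases hzz : z = z'
    · rw [hzz]; exact nchain_single hz'
    by_cases hshare : ∃ u, u ∈ z ∧ u ∈ z'
    · obtain ⟨u, hu, hu'⟩ := hshare
      exact S.conn_shared (fun m hm => IH m hm) hz hz' hu hu'
    -- no shared atom
    rcases Nat.lt_or_ge (Multiset.card z) (q + 2) with hzsmall | hzbig
    · rcases Nat.lt_or_ge (Multiset.card z') (q + 2) with hzsmall' | hzbig'
      · -- both small: single step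
        apply nchain_pair hz hz'
        calc facDist z z' ≤ max (Multiset.card z) (Multiset.card z') := facDist_le_max_card _ _
          _ ≤ q + 1 := by omega
      · exact nchain_symm (S.big_case (fun m hm => IH m hm) hz' hz hzbig')
    · exact S.big_case (fun m hm => IH m hm) hz hz' hzbig

end ACMLocal

namespace ACMLocal

variable {p a b α β : ℕ}

/-- the multiplicative order of p mod b. -/
theorem Setup.exists_order (S : Setup p a b α β) :
    ∃ d : ℕ, 0 < d ∧ ∀ k : ℕ, (p ^ k ≡ 1 [MOD b]) ↔ d ∣ k := by
  haveI : NeZero b := ⟨by have := S.two_le_b; omega⟩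
  set ω := ZMod.unitOfCoprime p S.cop_pb with hω
  refine ⟨orderOf ω, orderOf_pos ω, ?_⟩
  intro k
  have hbridge : (ω ^ k = 1) ↔ (p ^ k ≡ 1 [MOD b]) := by
    rw [← ZMod.natCast_eq_natCast_iff]
    constructor
    · intro h
      have := congrArg (Units.val) h
      push_cast at this ⊢
      rw [← ZMod.coe_unitOfCoprime p S.cop_pb]
      simpa [hω] using this
    · intro h
      ext
      push_cast at h ⊢
      rw [← ZMod.coe_unitOfCoprime p S.cop_pb] at h
      simpa [hω] using h
  rw [← hbridge, orderOf_dvd_iff_pow_eq_one]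

/-- a prime r > p with r ≡ p^t (mod b). -/
theorem Setup.exists_dirichlet (S : Setup p a b α β) (t : ℕ) :
    ∃ r : ℕ, p < r ∧ r.Prime ∧ r ≡ p ^ t [MOD b] := by
  haveI : NeZero b := ⟨by have := S.two_le_b; omega⟩
  have hunit : IsUnit ((p : ZMod b) ^ t) := by
    apply IsUnit.pow
    rw [ZMod.isUnit_iff_coprime]
    exact S.cop_pb
  obtain ⟨r, hrgt, hrp, hrc⟩ := Nat.forall_exists_prime_gt_and_eq_mod hunit p
  refine ⟨r, hrgt, hrp, ?_⟩
  rw [← ZMod.natCast_eq_natCast_iff]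
  push_cast
  exact hrc

/-- divisors of p^I * r^J have the shape p^i * r^j. -/
theorem shape_dvd {P R : ℕ} (hp : P.Prime) (hr : R.Prime) (hne : P ≠ R) {u : ℕ} {I J : ℕ}
    (hu : u ∣ P ^ I * R ^ J) : ∃ i j, i ≤ I ∧ j ≤ J ∧ u = P ^ i * R ^ j := by
  have hcop : Nat.Coprime (P ^ I) (R ^ J) :=
    Nat.Coprime.pow _ _ ((Nat.coprime_primes hp hr).2 hne)
  have hgcd : Nat.gcd u (P ^ I) * Nat.gcd u (R ^ J) = u :=
    (Nat.gcd_mul_gcd_eq_iff_dvd_mul_of_coprime hcop).2 hu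
  obtain ⟨i, hi, hieq⟩ := (Nat.dvd_prime_pow hp).1 (Nat.gcd_dvd_right u (P ^ I))
  obtain ⟨j, hj, hjeq⟩ := (Nat.dvd_prime_pow hr).1 (Nat.gcd_dvd_right u (R ^ J))
  exact ⟨i, j, hi, hj, by rw [← hgcd, hieq, hjeq]⟩

/-- vp of r-powers at p is zero for distinct primes. -/
theorem vp_pow_other {P R : ℕ} (hp : P.Prime) (hr : R.Prime) (hne : P ≠ R) (j : ℕ) :
    vp P (R ^ j) = 0 := by
  unfold vp
  rw [hr.factorization_pow]
  simp [Finsupp.single_apply, hne.symm]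

theorem vp_shape {P R : ℕ} (hp : P.Prime) (hr : R.Prime) (hne : P ≠ R) (i j : ℕ) :
    vp P (P ^ i * R ^ j) = i ∧ vp R (P ^ i * R ^ j) = j := by
  constructor
  · rw [vp_mul hp (pow_pos hp.pos i).ne' (pow_pos hr.pos j).ne', vp_pow hp,
      vp_pow_other hp hr hne]
    omega
  · rw [vp_mul hr (pow_pos hp.pos i).ne' (pow_pos hr.pos j).ne', vp_pow hr,
      vp_pow_other hr hp hne.symm]
    omega

end ACMLocal

namespace ACMLocal

variable {p a b α β : ℕ}

theorem le_sum_of_mem {s : Multiset ℕ} {u : ℕ} (hu : u ∈ s) : u ≤ s.sum := by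
  rw [← Multiset.cons_erase hu, Multiset.sum_cons]
  omega

theorem sum_map_erase {s : Multiset ℕ} (f : ℕ → ℕ) {u : ℕ} (hu : u ∈ s) :
    (s.map f).sum = f u + ((s.erase u).map f).sum := by
  conv_lhs => rw [← Multiset.cons_erase hu]
  rw [Multiset.map_cons, Multiset.sum_cons]

theorem sum_map_le_sum_map' (s : Multiset ℕ) (f g : ℕ → ℕ) (h : ∀ u ∈ s, f u ≤ g u) :
    (s.map f).sum ≤ (s.map g).sum := by
  induction s using Multiset.induction with
  | empty => simp
  | cons u t ih =>
    simp only [Multiset.map_cons, Multiset.sum_cons]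
    have h1 := h u (Multiset.mem_cons_self u t)
    have h2 := ih (fun w hw => h w (Multiset.mem_cons_of_mem hw))
    omega

/-- The key uniqueness lemma: for `1 ≤ k ≤ q`, the only factorization of `(p^α r)^k`
is `k` copies of `p^α r`. -/
theorem Setup.uniq (S : Setup p a b α β) {d t r : ℕ}
    (hdpos : 0 < d) (hdiff : ∀ k : ℕ, (p ^ k ≡ 1 [MOD b]) ↔ d ∣ k)
    (hr : r.Prime) (hrp : p < r) (hrt : r ≡ p ^ t [MOD b])
    (hdt : d ∣ α + t)
    {k : ℕ} (hk1 : 1 ≤ k) (hkq : k ≤ (β + α - 1) / α)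
    {w : Multiset ℕ}
    (hw : ∀ u ∈ w, acmAtom (a * p ^ α) (b * p ^ α) u)
    (hprod : w.prod = (p ^ α * r) ^ k) :
    w = Multiset.replicate k (p ^ α * r) := by
  obtain ⟨hq1, hq2, hq3⟩ := S.q_spec
  set q := (β + α - 1) / α with hqdef
  have hα := S.hα
  have hβα := S.hαβ
  have hne : p ≠ r := by omega
  have hp2 := S.hp.two_le
  have hr2 := hr.two_le
  set f : ℕ → ℕ := vp p with hf
  set g : ℕ → ℕ := vp r with hg
  -- every element has shape p^(f u) * r^(g u)
  have hA1k : (p ^ α * r) ^ k = p ^ (α * k) * r ^ k := by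
    rw [mul_pow, ← pow_mul]
  have hshape : ∀ u ∈ w, u = p ^ f u * r ^ g u := by
    intro u hu
    have hdvd : u ∣ p ^ (α * k) * r ^ k := by
      rw [← hA1k, ← hprod]
      exact Multiset.dvd_prod hu
    obtain ⟨i, j, _, _, hue⟩ := shape_dvd S.hp hr hne hdvd
    obtain ⟨hvi, hvj⟩ := vp_shape S.hp hr hne i j
    rw [hue, hf, hg, hvi, hvj]
  -- class condition
  have hclass : ∀ u ∈ w, d ∣ f u + t * g u := by
    intro u hu
    have hu1 : u ≡ 1 [MOD b] := S.mem_mod_one (hw u hu).1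
    have h1 : r ^ g u ≡ (p ^ t) ^ g u [MOD b] := hrt.pow _
    have h2 : u ≡ p ^ (f u + t * g u) [MOD b] := by
      calc u = p ^ f u * r ^ g u := hshape u hu
        _ ≡ p ^ f u * (p ^ t) ^ g u [MOD b] := h1.mul_left _
        _ = p ^ (f u + t * g u) := by rw [← pow_mul, ← pow_add]
    exact (hdiff _).1 (h2.symm.trans hu1)
  -- sums
  have hwnz : ∀ u ∈ w, u ≠ 0 := fun u hu => S.atom_ne_zero (hw u hu)
  have hfs : (w.map f).sum = α * k := by
    rw [hf, ← vp_prod S.hp w hwnz, hprod, hA1k]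
    exact (vp_shape S.hp hr hne (α * k) k).1
  have hgs : (w.map g).sum = k := by
    rw [hg, ← vp_prod hr w hwnz, hprod, hA1k]
    exact (vp_shape S.hp hr hne (α * k) k).2
  have hfge : ∀ u ∈ w, α ≤ f u := fun u hu => S.atom_vp_ge (hw u hu)
  by_cases hcase : ∃ u₀ ∈ w, g u₀ = 0
  · -- a pure power of p appears: impossible
    exfalso
    obtain ⟨u₀, hu₀, hg0⟩ := hcase
    have hu₀p : u₀ = p ^ f u₀ := by
      have := hshape u₀ hu₀
      rw [hg0, pow_zero, mul_one] at this
      exact this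
    have hu₀1 : p ^ f u₀ ≡ 1 [MOD b] := by
      rw [← hu₀p]; exact S.mem_mod_one (hw u₀ hu₀).1
    have hβf : β ≤ f u₀ := S.beta_min (hfge u₀ hu₀) hu₀1
    -- remaining f-sum < α but some remaining element exists with f ≥ α
    have hsplitf := sum_map_erase f hu₀
    have hsplitg := sum_map_erase g hu₀
    have hrestg : ((w.erase u₀).map g).sum = k := by omega
    have hrestne : w.erase u₀ ≠ 0 := by
      intro h0
      rw [h0] at hrestg
      simp at hrestg
      omega
    obtain ⟨u', hu'⟩ := Multiset.exists_mem_of_ne_zero hrestne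
    have hu'w : u' ∈ w := Multiset.mem_of_mem_erase hu'
    have h1 : f u' ≤ ((w.erase u₀).map f).sum :=
      le_sum_of_mem (Multiset.mem_map_of_mem f hu')
    have h2 : α ≤ f u' := hfge u' hu'w
    have h3 : α * k ≤ α * q := Nat.mul_le_mul_left _ hkq
    have hmc : α * q = q * α := Nat.mul_comm α q
    omega
  · push_neg at hcase
    have hg1 : ∀ u ∈ w, 1 ≤ g u := by
      intro u hu
      have := hcase u hu
      omega
    have hcardk : Multiset.card w ≤ k := by
      have h1 : Multiset.card (w.map g) * 1 ≤ (w.map g).sum := by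
        apply sum_card_mul_le
        intro v hv
        obtain ⟨u, hu, rfl⟩ := Multiset.mem_map.1 hv
        exact hg1 u hu
      simpa [hgs] using h1
    -- atoms with g ≥ 2 have f < 2α
    have claim2 : ∀ u ∈ w, 2 ≤ g u → f u < 2 * α := by
      intro u hu hgu2
      by_contra hcon
      push_neg at hcon
      set cof := p ^ (f u - α) * r ^ (g u - 1) with hcof
      have he1 : f u - α + α = f u := by omega
      have he2 : g u - 1 + 1 = g u := by omega
      have hprodid : cof * (p ^ α * r) = u := by
        have : cof * (p ^ α * r) = p ^ (f u - α + α) * r ^ (g u - 1 + 1) := by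
          rw [pow_add, pow_add, pow_one]; ring
        rw [he1, he2] at this
        rw [this, ← hshape u hu]
      have hA1mem : acmMem (a * p ^ α) (b * p ^ α) (p ^ α * r) := by
        rw [S.mem_iff]
        refine Or.inr ⟨Dvd.dvd.mul_right dvd_rfl r, ?_⟩
        calc p ^ α * r ≡ p ^ α * p ^ t [MOD b] := hrt.mul_left _
          _ = p ^ (α + t) := by rw [pow_add]
          _ ≡ 1 [MOD b] := (hdiff _).2 hdt
      have hA1mod : (p ^ α * r) ≡ 1 [MOD b] := S.mem_mod_one hA1mem
      have hcofP : p ^ α ∣ cof := by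
        apply Dvd.dvd.mul_right
        exact pow_dvd_pow p (by omega)
      have hcofmem : acmMem (a * p ^ α) (b * p ^ α) cof :=
        S.mem_cofactor (hw u hu).1 hA1mod hprodid hcofP
      have hcof0 : cof ≠ 0 := by
        rw [hcof]
        positivity
      have hrcof : r ∣ cof := by
        apply Dvd.dvd.mul_left
        exact dvd_pow_self r (by omega)
      have hcof1 : cof ≠ 1 := by
        intro h1
        rw [h1] at hrcof
        have := Nat.le_of_dvd one_pos hrcof
        omega
      have hA11 : p ^ α * r ≠ 1 := by
        intro h1
        have : 2 ≤ p ^ α * r := by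
          have : 2 ≤ p ^ α := S.two_le_pow_alpha
          nlinarith
        omega
      rcases (hw u hu).2.2 cof (p ^ α * r) hcofmem hA1mem hprodid.symm with h | h
      · exact hcof1 h
      · exact hA11 h
    by_cases hall : ∀ u ∈ w, g u = 1
    · -- all g = 1 : conclude
      have hcardeq : Multiset.card w = k := by
        have : w.map g = Multiset.replicate (Multiset.card w) 1 := by
          rw [Multiset.eq_replicate]
          constructor
          · simp
          · intro v hv
            obtain ⟨u, hu, rfl⟩ := Multiset.mem_map.1 hv
            exact hall u hu
        rw [this] at hgs
        simpa using hgs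
      have hfall : ∀ u ∈ w, f u = α := by
        intro u hu
        by_contra hcon
        have hfu : α + 1 ≤ f u := by
          have := hfge u hu
          omega
        have hsplit := sum_map_erase f hu
        have herest : Multiset.card (w.erase u) = k - 1 := by
          rw [Multiset.card_erase_of_mem hu, hcardeq]
          rfl
        have hrest : (k - 1) * α ≤ ((w.erase u).map f).sum := by
          have := sum_card_mul_le ((w.erase u).map f) α (by
            intro v hv
            obtain ⟨u', hu', rfl⟩ := Multiset.mem_map.1 hv
            exact hfge u' (Multiset.mem_of_mem_erase hu'))
          simpa [herest] using this
        have hk1' : (k - 1) * α = k * α - α := by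
          rw [Nat.sub_mul, one_mul]
        have hkα : k * α = α * k := by ring
        omega
      rw [Multiset.eq_replicate]
      refine ⟨hcardeq, ?_⟩
      intro u hu
      rw [hshape u hu, hfall u hu, hall u hu, pow_one]
    · push_neg at hall
      obtain ⟨u₀, hu₀, hgu₀⟩ := hall
      have hgu₀2 : 2 ≤ g u₀ := by
        have := hg1 u₀ hu₀
        omega
      exfalso
      rcases Nat.lt_trichotomy α d with hαd | hαd | hαd
      · -- α < d : then β = d and all g=1 atoms have f = α; strict sum contradiction
        have hβd : β = d := by
          have h1 : β ≤ d := S.beta_min (le_of_lt hαd) ((hdiff d).2 dvd_rfl)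
          have h2 : d ∣ β := (hdiff β).1 S.hpβ1
          have h3 : d ≤ β := Nat.le_of_dvd S.hβ h2
          omega
        have hf1 : ∀ u ∈ w, g u = 1 → f u = α := by
          intro u hu hgu
          have hc := hclass u hu
          rw [hgu, mul_one] at hc
          have h1 : d ∣ (f u + t) - (α + t) := Nat.dvd_sub hc hdt
          have h2 : (f u + t) - (α + t) = f u - α := by omega
          rw [h2] at h1
          have h3 : f u < α + β := S.atom_vp_lt (hw u hu)
          have h4 : f u - α < d := by omega
          have h5 : f u - α = 0 := by
            rcases Nat.eq_zero_or_pos (f u - α) with h | h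
            · exact h
            · exact absurd (Nat.le_of_dvd h h1) (by omega)
          have := hfge u hu
          omega
        -- pointwise f u ≤ g u * α with strict at u₀
        have hle : ∀ u ∈ w, f u ≤ g u * α := by
          intro u hu
          rcases Nat.lt_or_ge (g u) 2 with h1 | h1
          · have hgu : g u = 1 := by have := hg1 u hu; omega
            rw [hf1 u hu hgu, hgu, one_mul]
          · have := claim2 u hu h1
            have h2 : 2 * α ≤ g u * α := Nat.mul_le_mul_right _ h1
            omega
        have hstrict : (w.map f).sum < (w.map (fun u => g u * α)).sum := by
          rw [sum_map_erase f hu₀, sum_map_erase (fun u => g u * α) hu₀]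
          have h1 : f u₀ < g u₀ * α := by
            have := claim2 u₀ hu₀ hgu₀2
            have h2 : 2 * α ≤ g u₀ * α := Nat.mul_le_mul_right _ hgu₀2
            omega
          have h2 : ((w.erase u₀).map f).sum ≤ ((w.erase u₀).map (fun u => g u * α)).sum :=
            sum_map_le_sum_map' _ _ _ (fun u hu => hle u (Multiset.mem_of_mem_erase hu))
          omega
        have hrhs : (w.map (fun u => g u * α)).sum = k * α := by
          rw [Multiset.sum_map_mul_right, hgs]
        rw [hfs, hrhs] at hstrict
        have hmc : α * k = k * α := Nat.mul_comm α k
        omega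
      · -- α = d : contradiction with α < β
        have : β ≤ α := S.beta_min le_rfl ((hdiff α).2 (by rw [← hαd]))
        omega
      · -- d < α : q = 2, k = 2, single huge element contradiction
        have hβad : β < α + d := by
          by_contra hcon
          push_neg at hcon
          have h1 : d ∣ β - d := by
            have h2 : d ∣ β := (hdiff β).1 S.hpβ1
            exact Nat.dvd_sub h2 dvd_rfl
          have h2 : β ≤ β - d := S.beta_min (by omega) ((hdiff _).2 h1)
          omega
        have hq2' : q = 2 := by
          have h1 : q * α < 3 * α := by omega
          have h2 : q < 3 := Nat.lt_of_mul_lt_mul_right h1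
          omega
        have hk2 : k = 2 := by
          have h1 : g u₀ ≤ (w.map g).sum := le_sum_of_mem (Multiset.mem_map_of_mem g hu₀)
          omega
        -- the erase of u₀ is empty
        have hsplitg := sum_map_erase g hu₀
        have hrg : ((w.erase u₀).map g).sum = 0 := by omega
        have herase0 : w.erase u₀ = 0 := by
          by_contra hne0
          obtain ⟨u', hu'⟩ := Multiset.exists_mem_of_ne_zero hne0
          have h1 : g u' ≤ ((w.erase u₀).map g).sum :=
            le_sum_of_mem (Multiset.mem_map_of_mem g hu')
          have h2 := hg1 u' (Multiset.mem_of_mem_erase hu')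
          omega
        have hwu : w = {u₀} := by
          have := Multiset.cons_erase hu₀
          rw [herase0] at this
          exact this.symm
        have hsum : (w.map f).sum = f u₀ := by
          rw [hwu]
          simp
        have := claim2 u₀ hu₀ hgu₀2
        rw [hfs] at hsum
        rw [hk2] at hsum
        omega

end ACMLocal

namespace ACMLocal

variable {p a b α β : ℕ}

theorem first_move {R : Multiset ℕ → Multiset ℕ → Prop} {P : Multiset ℕ → Prop}
    {z₁ z₂ : Multiset ℕ} :
    ∀ L : List (Multiset ℕ), L ≠ [] → L.head? = some z₁ → L.getLast? = some z₂ →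
      z₂ ≠ z₁ → L.Chain' R → (∀ w ∈ L, P w) → ∃ w, P w ∧ w ≠ z₁ ∧ R z₁ w := by
  intro L
  induction L with
  | nil => intro h; exact absurd rfl h
  | cons x L' ih =>
    intro _ hhead hlast hne hchain hP
    have hx : x = z₁ := by simpa using hhead
    cases L' with
    | nil =>
      exfalso
      have hxz : x = z₂ := by simpa [List.getLast?] using hlast
      exact hne (hxz.symm.trans hx)
    | cons y L'' =>
      have hchain' := List.isChain_cons_cons.1 hchain
      by_cases hy : y = z₁
      · apply ih (by simp) (by simpa using hy) (by
          rw [← hlast, List.getLast?_cons_cons]) hne hchain'.2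
        intro w hw
        exact hP w (List.mem_cons_of_mem _ hw)
      · exact ⟨y, hP y (by simp), hy, hx ▸ hchain'.1⟩

theorem Setup.lower (S : Setup p a b α β) :
    ∀ N ∈ acmCatSet (a * p ^ α) (b * p ^ α), (β + α - 1) / α + 1 ≤ N := by
  intro N hN
  by_contra hcon
  push_neg at hcon
  obtain ⟨hq1, hq2, hq3⟩ := S.q_spec
  set q := (β + α - 1) / α with hqdef
  have hα := S.hα
  have hβα := S.hαβ
  have hp2 := S.hp.two_le
  obtain ⟨d, hdpos, hdiff⟩ := S.exists_order
  set t := d - α % d with ht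
  have hdt : d ∣ α + t := by
    refine ⟨α / d + 1, ?_⟩
    have h1 : d * (α / d + 1) = d * (α / d) + d := by ring
    have h2 := Nat.div_add_mod α d
    have h3 : α % d < d := Nat.mod_lt _ hdpos
    omega
  obtain ⟨r, hrp, hrprime, hrt⟩ := S.exists_dirichlet t
  have hne : p ≠ r := by omega
  have hr2 := hrprime.two_le
  -- the atom A₁ = p^α r
  set A₁ := p ^ α * r with hA₁
  have hA1v : vp p A₁ = α ∧ vp r A₁ = 1 := by
    have := vp_shape S.hp hrprime hne α 1
    rwa [pow_one] at this
  have hA1mem : acmMem (a * p ^ α) (b * p ^ α) A₁ := by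
    rw [S.mem_iff]
    refine Or.inr ⟨Dvd.dvd.mul_right dvd_rfl r, ?_⟩
    calc p ^ α * r ≡ p ^ α * p ^ t [MOD b] := hrt.mul_left _
      _ = p ^ (α + t) := by rw [pow_add]
      _ ≡ 1 [MOD b] := (hdiff _).2 hdt
  have hA1pos : 0 < A₁ := by
    rw [hA₁]
    exact Nat.mul_pos (pow_pos S.hp.pos α) (by omega)
  have hA1ne1 : A₁ ≠ 1 := by
    intro h1
    have h2 : 2 ≤ p ^ α := S.two_le_pow_alpha
    have h3 : 2 * 2 ≤ p ^ α * r := Nat.mul_le_mul h2 hr2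
    omega
  have hA1atom : acmAtom (a * p ^ α) (b * p ^ α) A₁ :=
    S.atom_of_small hA1mem hA1ne1 (by rw [hA1v.1]; omega)
  -- the element x₀ and two factorizations
  set x₀ := A₁ ^ (q + 1) with hx₀
  set z₁ := Multiset.replicate (q + 1) A₁ with hz₁
  have hz₁fact : acmFactorization (a * p ^ α) (b * p ^ α) x₀ z₁ := by
    constructor
    · intro u hu
      rw [Multiset.eq_of_mem_replicate hu]
      exact hA1atom
    · rw [hz₁, Multiset.prod_replicate]
  set ν₂ := (q + 1) * α - β with hν₂
  have haux : (q + 1) * α = q * α + α := by ring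
  have hν₂α : α ≤ ν₂ := by omega
  have hν₂2α : ν₂ < 2 * α := by omega
  have hβν : β + ν₂ = (q + 1) * α := by omega
  set u₂ := p ^ ν₂ * r ^ (q + 1) with hu₂
  have hu₂v : vp p u₂ = ν₂ ∧ vp r u₂ = q + 1 := vp_shape S.hp hrprime hne ν₂ (q + 1)
  have hdu₂ : d ∣ ν₂ + t * (q + 1) := by
    have h1 : (q + 1) * (α + t) = (q + 1) * α + t * (q + 1) := by ring
    have h2 : d ∣ (q + 1) * (α + t) := Dvd.dvd.mul_left hdt _
    have h3 : d ∣ β := (hdiff β).1 S.hpβ1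
    have h4 : ν₂ + t * (q + 1) = (q + 1) * (α + t) - β := by omega
    rw [h4]
    exact Nat.dvd_sub h2 h3
  have hu₂mem : acmMem (a * p ^ α) (b * p ^ α) u₂ := by
    rw [S.mem_iff]
    refine Or.inr ⟨Dvd.dvd.mul_right (pow_dvd_pow p hν₂α) _, ?_⟩
    calc p ^ ν₂ * r ^ (q + 1) ≡ p ^ ν₂ * (p ^ t) ^ (q + 1) [MOD b] :=
          (hrt.pow _).mul_left _
      _ = p ^ (ν₂ + t * (q + 1)) := by rw [← pow_mul, ← pow_add]
      _ ≡ 1 [MOD b] := (hdiff _).2 hdu₂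
  have hu₂ne1 : u₂ ≠ 1 := by
    intro h1
    have := hu₂v.1
    rw [h1, vp_one] at this
    omega
  have hu₂atom : acmAtom (a * p ^ α) (b * p ^ α) u₂ :=
    S.atom_of_small hu₂mem hu₂ne1 (by rw [hu₂v.1]; omega)
  set z₂ : Multiset ℕ := p ^ β ::ₘ {u₂} with hz₂
  have hz₂fact : acmFactorization (a * p ^ α) (b * p ^ α) x₀ z₂ := by
    constructor
    · intro u hu
      rcases Multiset.mem_cons.1 hu with rfl | hu
      · exact S.atom_pβ
      · rw [Multiset.mem_singleton] at hu
        rw [hu]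
        exact hu₂atom
    · show (p ^ β ::ₘ {u₂}).prod = x₀
      rw [Multiset.prod_cons, Multiset.prod_singleton, hu₂, hx₀, hA₁, mul_pow, ← pow_mul,
        ← mul_assoc, ← pow_add]
      have h5 : α * (q + 1) = (q + 1) * α := mul_comm _ _
      rw [h5, ← hβν]
  -- z₂ does not contain A₁, and z₂ ≠ z₁
  have hvrpβ : vp r (p ^ β) = 0 := vp_pow_other hrprime S.hp hne.symm β
  have hA1notz₂ : A₁ ∉ z₂ := by
    intro hmem
    rcases Multiset.mem_cons.1 hmem with h | h
    · have := hA1v.2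
      rw [h, hvrpβ] at this
      omega
    · rw [Multiset.mem_singleton] at h
      have := hA1v.2
      rw [h, hu₂v.2] at this
      omega
  have hz₂ne : z₂ ≠ z₁ := by
    intro h
    apply hA1notz₂
    rw [h, hz₁]
    exact Multiset.mem_replicate.2 ⟨Nat.succ_ne_zero _, rfl⟩
  -- apply the chain hypothesis
  have hx₀mem : acmMem (a * p ^ α) (b * p ^ α) x₀ := S.fact_mem hz₁fact
  obtain ⟨L, hLne, hLhead, hLlast, hLfact, hLchain⟩ :=
    hN x₀ hx₀mem z₁ z₂ hz₁fact hz₂fact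
  obtain ⟨w, hwfact, hwne, hwdist⟩ :=
    first_move L hLne hLhead hLlast hz₂ne hLchain hLfact
  -- w does not contain A₁
  have hA1notw : A₁ ∉ w := by
    intro hA1w
    apply hwne
    have hcons : A₁ ::ₘ w.erase A₁ = w := Multiset.cons_erase hA1w
    have hprodw : (w.erase A₁).prod = A₁ ^ q := by
      have h1 : A₁ * (w.erase A₁).prod = A₁ * A₁ ^ q := by
        rw [← Multiset.prod_cons, hcons, hwfact.2, hx₀, pow_succ']
      exact Nat.eq_of_mul_eq_mul_left hA1pos h1
    have := S.uniq hdpos hdiff hrprime hrp hrt hdt (le_trans one_le_two hq3)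
      (le_refl q) (fun u hu => hwfact.1 u (Multiset.mem_of_mem_erase hu)) hprodw
    rw [← hcons, this, hz₁, ← Multiset.replicate_succ]
  -- distance bound contradiction
  have hcount : Multiset.count A₁ (z₁ - w) = q + 1 := by
    rw [Multiset.count_sub, Multiset.count_eq_zero.2 hA1notw, hz₁, Multiset.count_replicate]
    simp
  have hcard : q + 1 ≤ Multiset.card (z₁ - w) := by
    rw [← hcount]
    exact Multiset.count_le_card _ _
  have : q + 1 ≤ facDist z₁ w := le_trans hcard (le_max_left _ _)
  omega

end ACMLocal


/-- For a local singular ACM `M = M_{a p^α, b p^α}` with `α < β` (`β`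
minimal with `p^β ∈ M`), the catenary degree of `M` is `1 + ⌈β/α⌉`. -/
theorem local_catenary_alpha_lt_beta (p a b α β : ℕ) (hp : p.Prime) (ha : 0 < a) (haleb : a ≤ b)
    (hab : Nat.Coprime a b) (hpa : ¬ p ∣ a) (hpb : ¬ p ∣ b) (hα : 0 < α)
    (hacm : (a * p ^ α) * (a * p ^ α) ≡ a * p ^ α [MOD b * p ^ α])
    (hβ : 0 < β) (hβmem : acmMem (a * p ^ α) (b * p ^ α) (p ^ β))
    (hβmin : ∀ γ : ℕ, 0 < γ → γ < β → ¬ acmMem (a * p ^ α) (b * p ^ α) (p ^ γ)) (hαβ : α < β) :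
    IsLeast (acmCatSet (a * p ^ α) (b * p ^ α)) (1 + (β + α - 1) / α) := by
  have S : ACMLocal.Setup p a b α β :=
    ⟨hp, ha, haleb, hab, hpa, hpb, hα, hacm, hβ, hβmem, hβmin, hαβ⟩
  constructor
  · intro x _ z₁ z₂ h1 h2
    have := S.upper x z₁ z₂ h1 h2
    rwa [Nat.add_comm] at this
  · intro N hN
    have := S.lower N hN
    omega
end

section
/- For every integer n ≥ 2 there exists a local singular ACM M with catenary degree exactly n; specifically, for a prime p the monoid M = M_{p^{n−1}, (p^{n−1}−1)p} has α = 1, β = n − 1, and c(M) = n. -/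
namespace ACM19


/-- core membership predicate for nonunits -/
def Pm (p d x : ℕ) : Prop := 0 < x ∧ p ∣ x ∧ x ≡ 1 [MOD p ^ d - 1]

variable {p d : ℕ}

lemma two_le_a (hp : p.Prime) (hd : 1 ≤ d) : 2 ≤ p ^ d :=
  Nat.one_lt_pow (by omega) hp.one_lt

lemma coprime_pf (hp : p.Prime) (hd : 1 ≤ d) : Nat.Coprime p (p ^ d - 1) := by
  rw [Nat.Prime.coprime_iff_not_dvd hp]
  intro h
  have h1 : p ∣ p ^ d := dvd_pow_self p (by omega)
  have h2 : p ∣ p ^ d - (p ^ d - 1) := Nat.dvd_sub h1 h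
  have h3 : p ^ d - (p ^ d - 1) = 1 := by have := two_le_a hp hd; omega
  rw [h3] at h2
  exact absurd (Nat.le_of_dvd one_pos h2) (by have := hp.two_le; omega)

lemma a_modeq (hp : p.Prime) (hd : 1 ≤ d) : p ^ d ≡ 1 [MOD p ^ d - 1] := by
  have h2 := two_le_a hp hd
  exact ((Nat.modEq_iff_dvd' (by omega)).mpr dvd_rfl).symm

lemma Pm.mul {x y : ℕ} (hx : Pm p d x) (hy : Pm p d y) : Pm p d (x * y) :=
  ⟨Nat.mul_pos hx.1 hy.1, Dvd.dvd.mul_right hx.2.1 y,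
    by simpa using hx.2.2.mul hy.2.2⟩

lemma Pm.ne_one (hp : p.Prime) {x : ℕ} (hx : Pm p d x) : x ≠ 1 := by
  rintro rfl
  exact absurd (Nat.le_of_dvd one_pos hx.2.1) (by have := hp.two_le; omega)

lemma Pm.ne_zero {x : ℕ} (hx : Pm p d x) : x ≠ 0 := hx.1.ne'

lemma Pm.ge (hp : p.Prime) (hd : 1 ≤ d) {x : ℕ} (hx : Pm p d x) : p ^ d ≤ x := by
  have h2 := two_le_a hp hd
  have hp2 := hp.two_le
  have hxp : p ≤ x := Nat.le_of_dvd hx.1 hx.2.1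
  have hppd : p ≤ p ^ d := Nat.le_self_pow (by omega) p
  by_cases hf : p ^ d - 1 = 1
  · omega
  · -- p^d - 1 ≥ 2
    have hf2 : 2 ≤ p ^ d - 1 := by omega
    have hmod : x % (p ^ d - 1) = 1 := by
      have := hx.2.2
      unfold Nat.ModEq at this
      rwa [Nat.mod_eq_of_lt (by omega : 1 < p ^ d - 1)] at this
    have hx1 : x ≠ 1 := hx.ne_one hp
    by_contra hlt
    push_neg at hlt
    rcases Nat.lt_or_ge x (p ^ d - 1) with h | h
    · rw [Nat.mod_eq_of_lt h] at hmod; omega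
    · have : x = p ^ d - 1 := by omega
      rw [this, Nat.mod_self] at hmod; omega

lemma mem_iff (hp : p.Prime) (hd : 1 ≤ d) {x : ℕ} :
    acmMem (p ^ d) ((p ^ d - 1) * p) x ↔ x = 1 ∨ Pm p d x := by
  have h2 := two_le_a hp hd
  constructor
  · rintro (rfl | ⟨k, rfl⟩)
    · exact Or.inl rfl
    · refine Or.inr ⟨by positivity, ?_, ?_⟩
      · exact Nat.dvd_add (dvd_pow_self p (by omega))
          (Dvd.dvd.mul_left (Dvd.intro_left _ rfl) k)
      · have hb : (p ^ d - 1) ∣ (p ^ d - 1) * p := Dvd.intro p rfl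
        have h0 : k * ((p ^ d - 1) * p) ≡ 0 [MOD p ^ d - 1] :=
          (Nat.modEq_zero_iff_dvd.mpr hb).mul_left k
        simpa using (a_modeq hp hd).add h0
  · rintro (rfl | hx)
    · exact Or.inl rfl
    · have hge := hx.ge hp hd
      have hmf : x ≡ p ^ d [MOD p ^ d - 1] := hx.2.2.trans (a_modeq hp hd).symm
      have hmp : x ≡ p ^ d [MOD p] :=
        (Nat.modEq_zero_iff_dvd.mpr hx.2.1).trans
          (Nat.modEq_zero_iff_dvd.mpr (dvd_pow_self p (by omega))).symm
      have hcop : (p ^ d - 1).Coprime p := (coprime_pf hp hd).symm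
      have hmb : x ≡ p ^ d [MOD (p ^ d - 1) * p] :=
        (Nat.modEq_and_modEq_iff_modEq_mul hcop).mp ⟨hmf, hmp⟩
      obtain ⟨k, hk⟩ := (Nat.modEq_iff_dvd' hge).mp hmb.symm
      exact Or.inr ⟨k, by rw [mul_comm k]; omega⟩

-- ### valuation lemmas
lemma V_pow (hp : p.Prime) (k : ℕ) : (p ^ k).factorization p = k := by
  simp [hp.factorization_pow]

lemma Pm.V_pos (hp : p.Prime) {x : ℕ} (hx : Pm p d x) : 1 ≤ x.factorization p :=
  hp.factorization_pos_of_dvd hx.ne_zero hx.2.1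

lemma V_mul (hp : p.Prime) {x y : ℕ} (hx : x ≠ 0) (hy : y ≠ 0) :
    (x * y).factorization p = x.factorization p + y.factorization p := by
  rw [Nat.factorization_mul hx hy]; rfl

lemma V_prod (hp : p.Prime) (s : Multiset ℕ) (h : ∀ u ∈ s, u ≠ 0) :
    (s.prod).factorization p = (s.map (fun u => u.factorization p)).sum := by
  induction s using Multiset.induction_on with
  | empty => simp
  | cons u s ih =>
    have hu : u ≠ 0 := h u (Multiset.mem_cons_self u s)
    have hs : ∀ v ∈ s, v ≠ 0 := fun v hv => h v (Multiset.mem_cons_of_mem hv)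
    have hsp : s.prod ≠ 0 := by
      rw [Ne, Multiset.prod_eq_zero_iff]
      intro h0; exact hs 0 h0 rfl
    rw [Multiset.prod_cons, V_mul hp hu hsp, ih hs]
    simp

lemma Pm_a (hp : p.Prime) (hd : 1 ≤ d) : Pm p d (p ^ d) :=
  ⟨pow_pos hp.pos d, dvd_pow_self p (by omega), a_modeq hp hd⟩

/-- Splitting off `p^d` from an element with large `p`-adic valuation. -/
lemma split_a (hp : p.Prime) (hd : 1 ≤ d) {y : ℕ} (hy : Pm p d y)
    (hV : d + 1 ≤ y.factorization p) :
    ∃ ρ, Pm p d ρ ∧ ρ.factorization p = y.factorization p - d ∧ y = p ^ d * ρ := by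
  set v := y.factorization p with hv
  set m := y / p ^ v with hm
  have hy0 : y ≠ 0 := hy.ne_zero
  have hym : p ^ v * m = y := Nat.ordProj_mul_ordCompl_eq_self y p
  have hpm : ¬ p ∣ m := Nat.not_dvd_ordCompl hp hy0
  have hm0 : m ≠ 0 := by intro h; rw [h, mul_zero] at hym; exact hy0 hym.symm
  have hsplit : y = p ^ d * (p ^ (v - d) * m) := by
    rw [← mul_assoc, ← pow_add]
    have : d + (v - d) = v := by omega
    rw [this, hym]
  refine ⟨p ^ (v - d) * m, ⟨?_, ?_, ?_⟩, ?_, hsplit⟩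
  · exact Nat.mul_pos (pow_pos hp.pos _) (Nat.pos_of_ne_zero hm0)
  · exact Dvd.dvd.mul_right (dvd_pow_self p (by omega)) m
  · -- congruence
    have h1 : (p ^ (v - d) * m) * p ^ d ≡ (p ^ (v - d) * m) * 1 [MOD p ^ d - 1] :=
      (a_modeq hp hd).mul_left _
    have h2 : (p ^ (v - d) * m) * p ^ d = y := by rw [mul_comm]; exact hsplit.symm
    rw [h2, mul_one] at h1
    exact h1.symm.trans hy.2.2
  · rw [V_mul hp (pow_pos hp.pos _).ne' hm0, V_pow hp,
      Nat.factorization_eq_zero_of_not_dvd hpm]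
    omega

lemma a_atom (hp : p.Prime) (hd : 1 ≤ d) :
    acmAtom (p ^ d) ((p ^ d - 1) * p) (p ^ d) := by
  have h2 := two_le_a hp hd
  refine ⟨Or.inr ⟨0, by simp⟩, by omega, ?_⟩
  intro y z hy hz heq
  by_contra hc
  push_neg at hc
  obtain ⟨hy1, hz1⟩ := hc
  have hPy : Pm p d y := ((mem_iff hp hd).mp hy).resolve_left hy1
  have hPz : Pm p d z := ((mem_iff hp hd).mp hz).resolve_left hz1
  have h1 : p ^ d * 2 ≤ y * z :=
    Nat.mul_le_mul (hPy.ge hp hd) (le_trans h2 (hPz.ge hp hd))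
  rw [← heq] at h1
  omega

lemma atom_Pm (hp : p.Prime) (hd : 1 ≤ d) {u : ℕ}
    (hu : acmAtom (p ^ d) ((p ^ d - 1) * p) u) : Pm p d u :=
  ((mem_iff hp hd).mp hu.1).resolve_left hu.2.1

lemma atom_V_le (hp : p.Prime) (hd : 1 ≤ d) {u : ℕ}
    (hu : acmAtom (p ^ d) ((p ^ d - 1) * p) u) : u.factorization p ≤ d := by
  by_contra h
  push_neg at h
  obtain ⟨ρ, hρ, _, heq⟩ := split_a hp hd (atom_Pm hp hd hu) (by omega)
  have h2 := two_le_a hp hd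
  rcases hu.2.2 (p ^ d) ρ ((mem_iff hp hd).mpr (Or.inr (Pm_a hp hd)))
      ((mem_iff hp hd).mpr (Or.inr hρ)) heq with h1 | h1
  · omega
  · exact hρ.ne_one hp h1

lemma atom_of_V_one (hp : p.Prime) (hd : 1 ≤ d) {u : ℕ} (hu : Pm p d u)
    (hV : u.factorization p = 1) : acmAtom (p ^ d) ((p ^ d - 1) * p) u := by
  refine ⟨(mem_iff hp hd).mpr (Or.inr hu), hu.ne_one hp, ?_⟩
  intro y z hy hz heq
  by_contra hc
  push_neg at hc
  obtain ⟨hy1, hz1⟩ := hc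
  have hPy : Pm p d y := ((mem_iff hp hd).mp hy).resolve_left hy1
  have hPz : Pm p d z := ((mem_iff hp hd).mp hz).resolve_left hz1
  have := hPy.V_pos hp
  have := hPz.V_pos hp
  have : u.factorization p = y.factorization p + z.factorization p := by
    rw [heq, V_mul hp hPy.ne_zero hPz.ne_zero]
  omega

/-- Atomicity: every `Pm` element factors into atoms. -/
lemma exists_fact (hp : p.Prime) (hd : 1 ≤ d) :
    ∀ y, Pm p d y → ∃ s : Multiset ℕ,
      (∀ u ∈ s, acmAtom (p ^ d) ((p ^ d - 1) * p) u) ∧ s.prod = y ∧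
        Multiset.card s ≤ y.factorization p := by
  intro y
  induction y using Nat.strong_induction_on with
  | _ y IH =>
    intro hy
    by_cases ha : acmAtom (p ^ d) ((p ^ d - 1) * p) y
    · refine ⟨{y}, by simpa using ha, by simp, ?_⟩
      simpa using hy.V_pos hp
    · have hmem : acmMem (p ^ d) ((p ^ d - 1) * p) y := (mem_iff hp hd).mpr (Or.inr hy)
      have hy1 : y ≠ 1 := hy.ne_one hp
      simp only [acmAtom, not_and] at ha
      have := ha hmem hy1
      push_neg at this
      obtain ⟨y₁, y₂, hm₁, hm₂, heq, h₁1, h₂1⟩ := this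
      have hP₁ : Pm p d y₁ := ((mem_iff hp hd).mp hm₁).resolve_left h₁1
      have hP₂ : Pm p d y₂ := ((mem_iff hp hd).mp hm₂).resolve_left h₂1
      have h2 := two_le_a hp hd
      have hge₁ := hP₁.ge hp hd
      have hge₂ := hP₂.ge hp hd
      have hlt₁ : y₁ < y := by
        have : y₁ * 2 ≤ y₁ * y₂ := Nat.mul_le_mul_left y₁ (by omega)
        rw [← heq] at this; omega
      have hlt₂ : y₂ < y := by
        have : 2 * y₂ ≤ y₁ * y₂ := Nat.mul_le_mul_right y₂ (by omega)
        rw [← heq] at this; omega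
      obtain ⟨s₁, ha₁, hp₁, hc₁⟩ := IH y₁ hlt₁ hP₁
      obtain ⟨s₂, ha₂, hp₂, hc₂⟩ := IH y₂ hlt₂ hP₂
      refine ⟨s₁ + s₂, ?_, by rw [Multiset.prod_add, hp₁, hp₂, heq], ?_⟩
      · intro u hu
        rcases Multiset.mem_add.mp hu with h | h
        · exact ha₁ u h
        · exact ha₂ u h
      · rw [Multiset.card_add, heq, V_mul hp hP₁.ne_zero hP₂.ne_zero]
        omega

-- ### distance lemmas
lemma facDist_comm (s t : Multiset ℕ) : facDist s t = facDist t s := by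
  unfold facDist; exact max_comm _ _

lemma facDist_self (s : Multiset ℕ) : facDist s s = 0 := by
  simp [facDist]

lemma facDist_cons (u : ℕ) (s t : Multiset ℕ) :
    facDist (u ::ₘ s) (u ::ₘ t) = facDist s t := by
  have h : ∀ s t : Multiset ℕ, (u ::ₘ s) - (u ::ₘ t) = s - t := by
    intro s t
    ext y
    rcases eq_or_ne y u with rfl | hne
    · simp [Multiset.count_sub, Multiset.count_cons]
    · simp [Multiset.count_sub, Multiset.count_cons, hne]
  unfold facDist
  rw [h, h]

lemma facDist_le_of_le {s t s' t' : Multiset ℕ} {N : ℕ}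
    (h1 : s - t ≤ s') (h2 : t - s ≤ t')
    (hc1 : Multiset.card s' ≤ N) (hc2 : Multiset.card t' ≤ N) :
    facDist s t ≤ N :=
  max_le (le_trans (Multiset.card_le_card h1) hc1)
    (le_trans (Multiset.card_le_card h2) hc2)

-- ### factorizations of 1
lemma fact_one {a b : ℕ} {s : Multiset ℕ} (h : acmFactorization a b 1 s) : s = 0 := by
  rcases h with ⟨ha, hprod⟩
  apply Multiset.eq_zero_of_forall_notMem
  intro u hu
  have : u ∣ (1 : ℕ) := hprod ▸ Multiset.dvd_prod hu
  exact (ha u hu).2.1 (Nat.dvd_one.mp this)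

lemma card_le_sum : ∀ (t : Multiset ℕ), (∀ u ∈ t, 1 ≤ u) → Multiset.card t ≤ t.sum := by
  intro t
  induction t using Multiset.induction_on with
  | empty => simp
  | cons u s ih =>
    intro h
    have h1 := h u (Multiset.mem_cons_self u s)
    have h2 := ih (fun v hv => h v (Multiset.mem_cons_of_mem hv))
    simp only [Multiset.card_cons, Multiset.sum_cons]
    omega

lemma card_fact_le (hp : p.Prime) (hd : 1 ≤ d) {x : ℕ} {s : Multiset ℕ}
    (hs : acmFactorization (p ^ d) ((p ^ d - 1) * p) x s) :
    Multiset.card s ≤ x.factorization p := by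
  have h0 : ∀ u ∈ s, u ≠ 0 := fun u hu => (atom_Pm hp hd (hs.1 u hu)).ne_zero
  have := V_prod hp s h0
  rw [hs.2] at this
  rw [this]
  have : Multiset.card s = Multiset.card (s.map (fun u => u.factorization p)) := by
    simp
  rw [this]
  apply card_le_sum
  intro v hv
  obtain ⟨u, hu, rfl⟩ := Multiset.mem_map.mp hv
  exact (atom_Pm hp hd (hs.1 u hu)).V_pos hp

-- ### chain lemmas (generic in a b)
lemma nchain_refl {a b x N : ℕ} {z : Multiset ℕ} (h : acmFactorization a b x z) :
    acmNChain a b x N z z :=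
  ⟨[z], by simp, rfl, rfl, by simpa using h, List.isChain_singleton _⟩

lemma nchain_single {a b x N : ℕ} {z₁ z₂ : Multiset ℕ}
    (h₁ : acmFactorization a b x z₁) (h₂ : acmFactorization a b x z₂)
    (hdist : facDist z₁ z₂ ≤ N) : acmNChain a b x N z₁ z₂ := by
  refine ⟨[z₁, z₂], by simp, rfl, rfl, ?_, ?_⟩
  · intro z hz
    simp only [List.mem_cons, List.not_mem_nil, or_false] at hz
    rcases hz with rfl | rfl
    · exact h₁
    · exact h₂
  · exact List.isChain_cons_cons.mpr ⟨hdist, List.isChain_singleton _⟩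

lemma nchain_trans {a b x N : ℕ} {z₁ z₂ z₃ : Multiset ℕ}
    (h₁ : acmNChain a b x N z₁ z₂) (h₂ : acmNChain a b x N z₂ z₃) :
    acmNChain a b x N z₁ z₃ := by
  obtain ⟨L₁, hn₁, hh₁, hl₁, hf₁, hc₁⟩ := h₁
  obtain ⟨L₂, hn₂, hh₂, hl₂, hf₂, hc₂⟩ := h₂
  refine ⟨L₁ ++ L₂, by simp [hn₁], ?_, ?_, ?_, ?_⟩
  · rw [List.head?_append, hh₁]; rfl
  · rw [List.getLast?_append, hl₂]; rfl
  · intro z hz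
    rcases List.mem_append.mp hz with h | h
    · exact hf₁ z h
    · exact hf₂ z h
  · show List.IsChain _ _; rw [List.isChain_append]
    refine ⟨hc₁, hc₂, ?_⟩
    intro u hu v hv
    rw [hl₁] at hu
    rw [hh₂] at hv
    cases hu; cases hv
    simp [facDist_self]

lemma nchain_symm {a b x N : ℕ} {z₁ z₂ : Multiset ℕ}
    (h : acmNChain a b x N z₁ z₂) : acmNChain a b x N z₂ z₁ := by
  obtain ⟨L, hn, hh, hl, hf, hc⟩ := h
  refine ⟨L.reverse, by simpa using hn, ?_, ?_, ?_, ?_⟩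
  · rw [List.head?_reverse, hl]
  · rw [List.getLast?_reverse, hh]
  · intro z hz; exact hf z (List.mem_reverse.mp hz)
  · show List.IsChain _ _; rw [List.isChain_reverse]
    apply List.IsChain.imp _ hc
    intro s t h
    simpa [facDist_comm] using h

lemma nchain_lift {a b x N u : ℕ} {z₁ z₂ : Multiset ℕ} (hu : acmAtom a b u)
    (h : acmNChain a b x N z₁ z₂) :
    acmNChain a b (u * x) N (u ::ₘ z₁) (u ::ₘ z₂) := by
  obtain ⟨L, hn, hh, hl, hf, hc⟩ := h
  refine ⟨L.map (fun s => u ::ₘ s), by simpa using hn, ?_, ?_, ?_, ?_⟩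
  · rw [List.head?_map, hh]; rfl
  · rw [List.getLast?_map, hl]; rfl
  · intro z hz
    obtain ⟨w, hw, rfl⟩ := List.mem_map.mp hz
    obtain ⟨hwa, hwp⟩ := hf w hw
    refine ⟨?_, by rw [Multiset.prod_cons, hwp]⟩
    intro v hv
    rcases Multiset.mem_cons.mp hv with rfl | h
    · exact hu
    · exact hwa v h
  · show List.IsChain _ _; rw [List.isChain_map]
    apply List.IsChain.imp _ hc
    intro s t h
    simpa [facDist_cons] using h

-- ### subset selection
lemma exists_sub (d : ℕ) :
    ∀ (t : Multiset ℕ) (g : ℕ → ℕ), (∀ u ∈ t, 1 ≤ g u ∧ g u ≤ d) →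
      d + 1 ≤ (t.map g).sum →
      ∃ s ≤ t, d + 1 ≤ (s.map g).sum ∧ (s.map g).sum ≤ 2 * d ∧
        Multiset.card s ≤ d + 1 := by
  intro t
  induction t using Multiset.induction_on with
  | empty => intro g _ h; simp at h
  | cons u t ih =>
    intro g hg hsum
    by_cases hc : d + 1 ≤ (t.map g).sum
    · obtain ⟨s, hs, h1, h2, h3⟩ := ih g (fun v hv => hg v (Multiset.mem_cons_of_mem hv)) hc
      exact ⟨s, le_trans hs (Multiset.le_cons_self t u), h1, h2, h3⟩
    · push_neg at hc
      refine ⟨u ::ₘ t, le_refl _, hsum, ?_, ?_⟩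
      · have := (hg u (Multiset.mem_cons_self u t)).2
        simp only [Multiset.map_cons, Multiset.sum_cons]
        omega
      · have hcard : Multiset.card t ≤ (t.map g).sum := by
          have : Multiset.card t = Multiset.card (t.map g) := by simp
          rw [this]
          apply card_le_sum
          intro v hv
          obtain ⟨w, hw, rfl⟩ := Multiset.mem_map.mp hv
          exact (hg w (Multiset.mem_cons_of_mem hw)).1
        simp only [Multiset.card_cons]
        omega

lemma Pm_prod (hp : p.Prime) (hd : 1 ≤ d) :
    ∀ (s : Multiset ℕ), s ≠ 0 → (∀ u ∈ s, Pm p d u) → Pm p d s.prod := by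
  intro s
  induction s using Multiset.induction_on with
  | empty => intro h; exact absurd rfl h
  | cons u t ih =>
    intro _ h
    rw [Multiset.prod_cons]
    have hu := h u (Multiset.mem_cons_self u t)
    by_cases ht : t = 0
    · subst ht; simpa using hu
    · exact (h u (Multiset.mem_cons_self u t)).mul
        (ih ht (fun v hv => h v (Multiset.mem_cons_of_mem hv)))

/-- One step of distance ≤ d+1 produces a factorization containing `p^d`. -/
lemma exists_step (hp : p.Prime) (hd : 1 ≤ d) {x : ℕ} {z : Multiset ℕ}
    (hx : Pm p d x) (hfz : acmFactorization (p ^ d) ((p ^ d - 1) * p) x z)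
    (hV : d + 1 ≤ x.factorization p) :
    ∃ z', acmFactorization (p ^ d) ((p ^ d - 1) * p) x z' ∧ p ^ d ∈ z' ∧
      facDist z z' ≤ d + 1 := by
  have h0 : ∀ u ∈ z, u ≠ 0 := fun u hu => (atom_Pm hp hd (hfz.1 u hu)).ne_zero
  have hVx : (z.map (fun u => u.factorization p)).sum = x.factorization p := by
    rw [← V_prod hp z h0, hfz.2]
  obtain ⟨S, hSz, hS1, hS2, hS3⟩ := exists_sub d z (fun u => u.factorization p)
    (fun u hu => ⟨(atom_Pm hp hd (hfz.1 u hu)).V_pos hp, atom_V_le hp hd (hfz.1 u hu)⟩)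
    (by omega)
  have hSne : S ≠ 0 := by
    intro h; rw [h] at hS1; simp at hS1
  have hrest : z - S + S = z := tsub_add_cancel_of_le hSz
  set y := S.prod with hy
  have hPy : Pm p d y := Pm_prod hp hd S hSne
    (fun u hu => atom_Pm hp hd (hfz.1 u (Multiset.mem_of_le hSz hu)))
  have hVy : y.factorization p = (S.map (fun u => u.factorization p)).sum :=
    V_prod hp S (fun u hu => (atom_Pm hp hd (hfz.1 u (Multiset.mem_of_le hSz hu))).ne_zero)
  obtain ⟨ρ, hPρ, hVρ, hyρ⟩ := split_a hp hd hPy (by omega)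
  obtain ⟨sρ, hsρa, hsρp, hsρc⟩ := exists_fact hp hd ρ hPρ
  have hVρd : ρ.factorization p ≤ d := by omega
  set w : Multiset ℕ := p ^ d ::ₘ sρ with hw
  refine ⟨z - S + w, ⟨?_, ?_⟩, ?_, ?_⟩
  · intro u hu
    rcases Multiset.mem_add.mp hu with h | h
    · exact hfz.1 u (Multiset.mem_of_le (tsub_le_self) h)
    · rcases Multiset.mem_cons.mp h with rfl | h
      · exact a_atom hp hd
      · exact hsρa u h
  · rw [Multiset.prod_add, hw, Multiset.prod_cons, hsρp, ← hyρ, hy,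
      ← Multiset.prod_add, hrest, hfz.2]
  · exact Multiset.mem_add.mpr (Or.inr (Multiset.mem_cons_self _ _))
  · apply facDist_le_of_le (s' := S) (t' := w)
    · rw [Multiset.le_iff_count]
      intro y'
      have hc := (Multiset.le_iff_count.mp hSz) y'
      simp only [Multiset.count_sub, Multiset.count_add]
      omega
    · rw [Multiset.le_iff_count]
      intro y'
      simp only [Multiset.count_sub, Multiset.count_add]
      omega
    · exact hS3
    · rw [hw]
      simp only [Multiset.card_cons]
      omega

/-- Main connectivity: any two factorizations are (d+1)-chain connected. -/
lemma conn (hp : p.Prime) (hd : 1 ≤ d) :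
    ∀ v x, x.factorization p ≤ v → (x = 1 ∨ Pm p d x) →
      ∀ z₁ z₂, acmFactorization (p ^ d) ((p ^ d - 1) * p) x z₁ →
        acmFactorization (p ^ d) ((p ^ d - 1) * p) x z₂ →
        acmNChain (p ^ d) ((p ^ d - 1) * p) x (d + 1) z₁ z₂ := by
  intro v
  induction v using Nat.strong_induction_on with
  | _ v IH =>
    intro x hVx hx z₁ z₂ h₁ h₂
    rcases hx with rfl | hx
    · rw [fact_one h₁, fact_one h₂]
      exact nchain_refl (by rw [← fact_one h₁]; exact h₁)
    by_cases hsmall : x.factorization p ≤ d + 1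
    · apply nchain_single h₁ h₂
      apply facDist_le_of_le (s' := z₁) (t' := z₂) (tsub_le_self) (tsub_le_self)
      · exact le_trans (card_fact_le hp hd h₁) hsmall
      · exact le_trans (card_fact_le hp hd h₂) hsmall
    · push_neg at hsmall
      obtain ⟨z₁', hf₁', hmem₁, hd₁⟩ := exists_step hp hd hx h₁ (by omega)
      obtain ⟨z₂', hf₂', hmem₂, hd₂⟩ := exists_step hp hd hx h₂ (by omega)
      -- strip off p^d
      have ha := a_atom hp hd
      have hA2 := two_le_a hp hd
      have key : ∀ z' : Multiset ℕ, acmFactorization (p ^ d) ((p ^ d - 1) * p) x z' →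
          p ^ d ∈ z' → p ^ d * (z'.erase (p ^ d)).prod = x := by
        intro z' hf hm
        rw [← Multiset.prod_cons, Multiset.cons_erase hm, hf.2]
      have k₁ := key z₁' hf₁' hmem₁
      have k₂ := key z₂' hf₂' hmem₂
      set x' := (z₁'.erase (p ^ d)).prod with hx'
      have hx'2 : (z₂'.erase (p ^ d)).prod = x' := by
        apply Nat.eq_of_mul_eq_mul_left (show 0 < p ^ d by positivity)
        rw [k₁, k₂]
      have hfe₁ : acmFactorization (p ^ d) ((p ^ d - 1) * p) x' (z₁'.erase (p ^ d)) :=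
        ⟨fun u hu => hf₁'.1 u (Multiset.mem_of_mem_erase hu), rfl⟩
      have hfe₂ : acmFactorization (p ^ d) ((p ^ d - 1) * p) x' (z₂'.erase (p ^ d)) :=
        ⟨fun u hu => hf₂'.1 u (Multiset.mem_of_mem_erase hu), hx'2⟩
      have hx'P : x' = 1 ∨ Pm p d x' := by
        by_cases he : z₁'.erase (p ^ d) = 0
        · left; rw [hx', he]; rfl
        · right
          exact Pm_prod hp hd _ he
            (fun u hu => atom_Pm hp hd (hf₁'.1 u (Multiset.mem_of_mem_erase hu)))
      have hx'0 : x' ≠ 0 := by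
        intro h; rw [h, mul_zero] at k₁; exact hx.ne_zero k₁.symm
      have hVx' : x'.factorization p ≤ v - 1 := by
        have : x.factorization p = d + x'.factorization p := by
          rw [← k₁, V_mul hp (by positivity) hx'0, V_pow hp]
        omega
      have hchain := IH (v - 1) (by omega) x' hVx' hx'P _ _ hfe₁ hfe₂
      have hlift := nchain_lift (a_atom hp hd) hchain
      rw [k₁, Multiset.cons_erase hmem₁] at hlift
      have hlift' : acmNChain (p ^ d) ((p ^ d - 1) * p) x (d + 1) z₁' z₂' := by
        have : p ^ d ::ₘ z₂'.erase (p ^ d) = z₂' := Multiset.cons_erase hmem₂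
        rwa [this] at hlift
      exact nchain_trans (nchain_single h₁ hf₁' hd₁)
        (nchain_trans hlift' (nchain_symm (nchain_single h₂ hf₂' hd₂)))

/-- Upper bound: d+1 is in the catenary set. -/
lemma upper (hp : p.Prime) (hd : 1 ≤ d) :
    (d + 1) ∈ acmCatSet (p ^ d) ((p ^ d - 1) * p) := by
  intro x hmem z₁ z₂ h₁ h₂
  exact conn hp hd (x.factorization p) x le_rfl ((mem_iff hp hd).mp hmem) z₁ z₂ h₁ h₂

-- ### order of p mod p^d - 1
lemma pow_modeq_one_of_dvd (hp : p.Prime) (hd : 1 ≤ d) {e : ℕ} (h : d ∣ e) :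
    p ^ e ≡ 1 [MOD p ^ d - 1] := by
  obtain ⟨k, rfl⟩ := h
  rw [pow_mul]
  simpa using (a_modeq hp hd).pow k

lemma dvd_of_pow_modeq_one (hp : p.Prime) (hd : 1 ≤ d) {e : ℕ}
    (h : p ^ e ≡ 1 [MOD p ^ d - 1]) : d ∣ e := by
  set r := e % d with hr
  have hrd : r < d := Nat.mod_lt e (by omega)
  have h1 : p ^ e = (p ^ d) ^ (e / d) * p ^ r := by
    rw [← pow_mul, ← pow_add]
    congr 1
    have := Nat.div_add_mod e d
    omega
  have h2 : p ^ e ≡ p ^ r [MOD p ^ d - 1] := by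
    calc p ^ e = (p ^ d) ^ (e / d) * p ^ r := h1
      _ ≡ 1 ^ (e / d) * p ^ r [MOD p ^ d - 1] := ((a_modeq hp hd).pow _).mul_right _
      _ = p ^ r := by ring
  have h3 : p ^ r ≡ 1 [MOD p ^ d - 1] := h2.symm.trans h
  suffices hr0 : r = 0 by
    rw [hr] at hr0
    exact Nat.dvd_of_mod_eq_zero hr0
  by_contra hr0
  have hd2 : 2 ≤ d := by omega
  have hp2 := hp.two_le
  have hP1 : 2 ≤ p ^ (d - 1) := Nat.one_lt_pow (by omega) hp.one_lt
  have hpd : 2 * p ^ (d - 1) ≤ p ^ d := by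
    have : p ^ d = p ^ (d - 1) * p := by
      rw [← pow_succ]
      congr 1
      omega
    rw [this, mul_comm]
    exact Nat.mul_le_mul le_rfl hp2
  have hpr : p ^ r ≤ p ^ (d - 1) := Nat.pow_le_pow_right (by omega) (by omega)
  have hpr2 : 2 ≤ p ^ r := Nat.one_lt_pow (by omega) hp.one_lt
  have hlt : p ^ r < p ^ d - 1 := by omega
  have hmod : p ^ r % (p ^ d - 1) = 1 % (p ^ d - 1) := h3
  rw [Nat.mod_eq_of_lt hlt, Nat.mod_eq_of_lt (by omega)] at hmod
  omega

section lowerbound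

variable {q : ℕ}

lemma Vp_pq (hp : p.Prime) (hq : q.Prime) (hqp : p ≠ q) (i j : ℕ) :
    (p ^ i * q ^ j).factorization p = i := by
  rw [V_mul hp (pow_pos hp.pos i).ne' (pow_pos hq.pos j).ne', V_pow hp,
    hq.factorization_pow]
  rw [Finsupp.single_apply, if_neg (fun h => hqp h.symm)]
  omega

lemma Vq_pq (hp : p.Prime) (hq : q.Prime) (hqp : p ≠ q) (i j : ℕ) :
    (p ^ i * q ^ j).factorization q = j := by
  rw [V_mul hq (pow_pos hp.pos i).ne' (pow_pos hq.pos j).ne', V_pow hq,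
    hp.factorization_pow]
  rw [Finsupp.single_apply, if_neg hqp]
  omega

lemma Pm_pq (hp : p.Prime) (hd : 1 ≤ d) (hq : q.Prime) (hqp : p ≠ q)
    (hqm : q ≡ p ^ (d - 1) [MOD p ^ d - 1]) (i j : ℕ) :
    Pm p d (p ^ i * q ^ j) ↔ 1 ≤ i ∧ d ∣ (i + (d - 1) * j) := by
  have hcast : p ^ i * q ^ j ≡ p ^ (i + (d - 1) * j) [MOD p ^ d - 1] := by
    calc p ^ i * q ^ j ≡ p ^ i * (p ^ (d - 1)) ^ j [MOD p ^ d - 1] :=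
          (hqm.pow j).mul_left _
      _ = p ^ (i + (d - 1) * j) := by rw [← pow_mul, ← pow_add]
  constructor
  · intro hPm
    have hi : 1 ≤ i := by
      by_contra h
      push_neg at h
      interval_cases i
      have : p ∣ q ^ j := by simpa using hPm.2.1
      exact hqp ((Nat.prime_dvd_prime_iff_eq hp hq).mp (hp.dvd_of_dvd_pow this))
    refine ⟨hi, dvd_of_pow_modeq_one hp hd (hcast.symm.trans hPm.2.2)⟩
  · rintro ⟨hi, hdvd⟩
    refine ⟨Nat.mul_pos (pow_pos hp.pos i) (pow_pos hq.pos j),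
      Dvd.dvd.mul_right (dvd_pow_self p (by omega)) _, ?_⟩
    exact hcast.trans (pow_modeq_one_of_dvd hp hd hdvd)

lemma dvd_classify (hp : p.Prime) (hq : q.Prime) (hqp : p ≠ q) {u : ℕ}
    (hu0 : u ≠ 0) (hdvd : u ∣ p ^ (d + 1) * q ^ (d + 1)) :
    ∃ i ≤ d + 1, ∃ j ≤ d + 1, u = p ^ i * q ^ j := by
  set i := u.factorization p with hi
  have hum : p ^ i * (u / p ^ i) = u := Nat.ordProj_mul_ordCompl_eq_self u p
  have hpm : ¬ p ∣ (u / p ^ i) := Nat.not_dvd_ordCompl hp hu0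
  have hmd : (u / p ^ i) ∣ p ^ (d + 1) * q ^ (d + 1) := dvd_trans (Nat.ordCompl_dvd u p) hdvd
  have hcop : (u / p ^ i).Coprime (p ^ (d + 1)) :=
    Nat.Coprime.pow_right _ (Nat.coprime_comm.mp ((Nat.Prime.coprime_iff_not_dvd hp).mpr hpm))
  have hmq : (u / p ^ i) ∣ q ^ (d + 1) := by
    apply hcop.dvd_of_dvd_mul_right
    rwa [mul_comm] at hmd
  obtain ⟨j, hj, hjm⟩ := (Nat.dvd_prime_pow hq).mp hmq
  rw [hjm] at hum
  have hpi : p ^ i ∣ p ^ (d + 1) * q ^ (d + 1) := dvd_trans (Nat.ordProj_dvd u p) hdvd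
  have hcop2 : (p ^ i).Coprime (q ^ (d + 1)) :=
    Nat.Coprime.pow _ _ ((Nat.coprime_primes hp hq).mpr hqp)
  have hile : i ≤ d + 1 := by
    rw [← Nat.pow_dvd_pow_iff_le_right hp.one_lt]
    exact hcop2.dvd_of_dvd_mul_right hpi
  exact ⟨i, hile, j, hj, hum.symm⟩

lemma atom_classify (hp : p.Prime) (hd : 1 ≤ d) (hq : q.Prime) (hqp : p ≠ q)
    (hqm : q ≡ p ^ (d - 1) [MOD p ^ d - 1]) {u : ℕ}
    (hu : acmAtom (p ^ d) ((p ^ d - 1) * p) u)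
    (hdvd : u ∣ p ^ (d + 1) * q ^ (d + 1)) :
    u = p ^ d ∨ u = p * q ∨ u = p * q ^ (d + 1) := by
  have hPu := atom_Pm hp hd hu
  obtain ⟨i, hile, j, hjle, rfl⟩ := dvd_classify hp hq hqp hPu.ne_zero hdvd
  obtain ⟨hi1, hcond⟩ := (Pm_pq hp hd hq hqp hqm i j).mp hPu
  have hiled : i ≤ d := by
    have := atom_V_le hp hd hu
    rwa [Vp_pq hp hq hqp] at this
  obtain ⟨e, rfl⟩ : ∃ e, d = e + 1 := ⟨d - 1, by omega⟩
  simp only [Nat.add_sub_cancel] at hcond hqm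
  -- integer analysis: (e+1) ∣ i - j
  have h1 : ((e : ℤ) + 1) ∣ ((i : ℤ) + e * j) := by
    obtain ⟨k, hk⟩ := hcond
    exact ⟨(k : ℤ), by exact_mod_cast hk⟩
  have h2 : ((e : ℤ) + 1) ∣ ((e : ℤ) + 1) * j := Dvd.intro _ rfl
  have h3 : ((e : ℤ) + 1) ∣ ((i : ℤ) - j) := by
    have h4 := h1.sub h2
    have h5 : (i : ℤ) + e * j - ((e : ℤ) + 1) * j = (i : ℤ) - j := by ring
    rwa [h5] at h4
  obtain ⟨k, hk⟩ := h3
  have hiZ : (1 : ℤ) ≤ i := by exact_mod_cast hi1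
  have hiZ2 : (i : ℤ) ≤ e + 1 := by exact_mod_cast hiled
  have hjZ : (j : ℤ) ≤ e + 2 := by exact_mod_cast hjle
  have hjZ0 : (0 : ℤ) ≤ j := Int.natCast_nonneg j
  have heZ : (0 : ℤ) ≤ e := Int.natCast_nonneg e
  have hkl : -1 ≤ k := by
    by_contra h
    push_neg at h
    have hk2 : k ≤ -2 := by omega
    have : ((e : ℤ) + 1) * k ≤ ((e : ℤ) + 1) * (-2) :=
      mul_le_mul_of_nonneg_left hk2 (by linarith)
    linarith
  have hku : k ≤ 1 := by
    by_contra h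
    push_neg at h
    have hk2 : (2 : ℤ) ≤ k := by omega
    have : ((e : ℤ) + 1) * 2 ≤ ((e : ℤ) + 1) * k :=
      mul_le_mul_of_nonneg_left hk2 (by linarith)
    linarith
  interval_cases k
  · -- k = -1 : j = i + e + 1, so i = 1, j = e + 2
    have hiz : (i : ℤ) = 1 := by linarith
    have hjz : (j : ℤ) = (e : ℤ) + 2 := by linarith
    have hi' : i = 1 := by exact_mod_cast hiz
    have hj' : j = e + 2 := by exact_mod_cast hjz
    subst hi'; subst hj'
    right; right
    ring
  · -- k = 0 : i = j
    have hij : i = j := by exact_mod_cast (by linarith : (i : ℤ) = j)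
    subst hij
    by_cases hione : i = 1
    · subst hione
      right; left
      ring
    · exfalso
      obtain ⟨i', rfl⟩ : ∃ i', i = i' + 1 := ⟨i - 1, by omega⟩
      have hi'1 : 1 ≤ i' := by omega
      have mem1 : acmMem (p ^ (e + 1)) ((p ^ (e + 1) - 1) * p) (p * q) := by
        apply (mem_iff hp hd).mpr
        apply Or.inr
        have h1 := (Pm_pq hp hd hq hqp hqm 1 1).mpr ⟨le_rfl, by
          simp only [Nat.add_sub_cancel]; exact ⟨1, by ring⟩⟩
        simpa using h1
      have mem2 : acmMem (p ^ (e + 1)) ((p ^ (e + 1) - 1) * p) (p ^ i' * q ^ i') := by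
        apply (mem_iff hp hd).mpr
        refine Or.inr ((Pm_pq hp hd hq hqp hqm i' i').mpr ⟨hi'1, ?_⟩)
        simp only [Nat.add_sub_cancel]
        exact ⟨i', by ring⟩
      have heq : p ^ (i' + 1) * q ^ (i' + 1) = (p * q) * (p ^ i' * q ^ i') := by ring
      rcases hu.2.2 (p * q) (p ^ i' * q ^ i') mem1 mem2 heq with h | h
      · have : 2 ≤ p * q := Nat.le_trans hp.two_le (Nat.le_mul_of_pos_right p hq.pos)
        omega
      · exact (((Pm_pq hp hd hq hqp hqm i' i').mpr ⟨hi'1, by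
          simp only [Nat.add_sub_cancel]; exact ⟨i', by ring⟩⟩).ne_one hp) h
  · -- k = 1 : i = e + 1, j = 0
    have hiz : (i : ℤ) = (e : ℤ) + 1 := by linarith
    have hjz : (j : ℤ) = 0 := by linarith
    have hi' : i = e + 1 := by exact_mod_cast hiz
    have hj' : j = 0 := by exact_mod_cast hjz
    subst hi'; subst hj'
    left
    ring

lemma ABC_ne (hp : p.Prime) (hd : 1 ≤ d) (hq : q.Prime) (hqp : p ≠ q) :
    p ^ d ≠ p * q ∧ p * q ≠ p * q ^ (d + 1) ∧ p ^ d ≠ p * q ^ (d + 1) := by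
  have h1 : (p ^ d).factorization q = 0 := by
    have := Vq_pq hp hq hqp d 0
    simpa using this
  have h2 : (p * q).factorization q = 1 := by
    have := Vq_pq hp hq hqp 1 1
    simpa using this
  have h3 : (p * q ^ (d + 1)).factorization q = d + 1 := by
    have := Vq_pq hp hq hqp 1 (d + 1)
    simpa using this
  refine ⟨fun h => ?_, fun h => ?_, fun h => ?_⟩
  · rw [h] at h1; omega
  · rw [h] at h2; omega
  · rw [h] at h1; omega

lemma fact_classify (hp : p.Prime) (hd : 1 ≤ d) (hq : q.Prime) (hqp : p ≠ q)
    (hqm : q ≡ p ^ (d - 1) [MOD p ^ d - 1]) {s : Multiset ℕ}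
    (hs : acmFactorization (p ^ d) ((p ^ d - 1) * p) (p ^ (d + 1) * q ^ (d + 1)) s) :
    s = Multiset.replicate (d + 1) (p * q) ∨ s = {p ^ d, p * q ^ (d + 1)} := by
  have hclass : ∀ u ∈ s, u = p ^ d ∨ u = p * q ∨ u = p * q ^ (d + 1) := by
    intro u hu
    apply atom_classify hp hd hq hqp hqm (hs.1 u hu)
    rw [← hs.2]
    exact Multiset.dvd_prod hu
  obtain ⟨hAB, hBC, hAC⟩ := ABC_ne hp hd hq hqp
  set γ := s.count (p ^ d) with hγ
  set α := s.count (p * q) with hα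
  set β := s.count (p * q ^ (d + 1)) with hβ
  have hs_eq : s = Multiset.replicate γ (p ^ d) +
      (Multiset.replicate α (p * q) + Multiset.replicate β (p * q ^ (d + 1))) := by
    ext y
    simp only [Multiset.count_add, Multiset.count_replicate]
    by_cases h1 : y = p ^ d
    · subst h1
      rw [if_pos rfl, if_neg hAB.symm, if_neg hAC.symm]
      omega
    by_cases h2 : y = p * q
    · subst h2
      rw [if_neg hAB, if_pos rfl, if_neg hBC.symm]
      omega
    by_cases h3 : y = p * q ^ (d + 1)
    · subst h3
      rw [if_neg hAC, if_neg hBC, if_pos rfl]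
      omega
    · rw [if_neg (fun h => h1 h.symm), if_neg (fun h => h2 h.symm),
        if_neg (fun h => h3 h.symm)]
      have : y ∉ s := by
        intro hy
        rcases hclass y hy with h | h | h
        · exact h1 h
        · exact h2 h
        · exact h3 h
      simp [Multiset.count_eq_zero.mpr this]
  have hprod : (p ^ d) ^ γ * ((p * q) ^ α * (p * q ^ (d + 1)) ^ β) =
      p ^ (d + 1) * q ^ (d + 1) := by
    have h := hs.2
    rw [hs_eq] at h
    rwa [Multiset.prod_add, Multiset.prod_add, Multiset.prod_replicate,
      Multiset.prod_replicate, Multiset.prod_replicate] at h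
  have hform : (p ^ d) ^ γ * ((p * q) ^ α * (p * q ^ (d + 1)) ^ β) =
      p ^ (d * γ + α + β) * q ^ (α + (d + 1) * β) := by ring
  rw [hform] at hprod
  have hE : d * γ + α + β = d + 1 := by
    have h1 := Vp_pq hp hq hqp (d * γ + α + β) (α + (d + 1) * β)
    have h2 := Vp_pq hp hq hqp (d + 1) (d + 1)
    rw [hprod] at h1
    omega
  have hF : α + (d + 1) * β = d + 1 := by
    have h1 := Vq_pq hp hq hqp (d * γ + α + β) (α + (d + 1) * β)
    have h2 := Vq_pq hp hq hqp (d + 1) (d + 1)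
    rw [hprod] at h1
    omega
  have hβ1 : β ≤ 1 := by
    by_contra h
    push_neg at h
    have : (d + 1) * 2 ≤ (d + 1) * β := Nat.mul_le_mul le_rfl h
    omega
  interval_cases β
  · -- β = 0 : α = d + 1, γ = 0
    have hα' : α = d + 1 := by omega
    have hγ' : γ = 0 := by
      have : d * γ = 0 := by omega
      rcases Nat.mul_eq_zero.mp this with h | h
      · omega
      · exact h
    left
    rw [hs_eq, hγ', hα']
    simp
  · -- β = 1 : α = 0, γ = 1
    have hα' : α = 0 := by omega
    have hγ' : γ = 1 := by
      have h1 : d * γ = d * 1 := by omega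
      exact Nat.eq_of_mul_eq_mul_left (by omega) h1
    right
    rw [hs_eq, hγ', hα']
    simp only [Multiset.replicate_one, Multiset.replicate_zero]
    rw [zero_add]
    rfl

lemma chain_pair {X : Type*} {R : X → X → Prop} (hsymm : ∀ u v, R u v → R v u)
    (zA zB : X) (hne : zA ≠ zB) :
    ∀ L : List X, L.Chain' R → L.head? = some zA → L.getLast? = some zB →
      (∀ w ∈ L, w = zA ∨ w = zB) → R zA zB := by
  intro L
  induction L with
  | nil => intro _ h; simp at h
  | cons x L IH =>
    intro hc hh hl hmem
    have hx : x = zA := by simpa using hh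
    subst hx
    cases L with
    | nil =>
      simp only [List.getLast?_singleton, Option.some.injEq] at hl
      exact absurd hl hne
    | cons y L' =>
      rw [List.getLast?_cons_cons] at hl
      obtain ⟨hR, hc'⟩ := List.isChain_cons_cons.mp hc
      rcases hmem y (by simp) with rfl | rfl
      · exact IH hc' rfl hl (fun w hw => hmem w (List.mem_cons_of_mem _ hw))
      · exact hR

lemma lower (hp : p.Prime) (hd : 1 ≤ d) (hq : q.Prime) (hqp : p ≠ q)
    (hqm : q ≡ p ^ (d - 1) [MOD p ^ d - 1]) {N : ℕ}
    (hN : N ∈ acmCatSet (p ^ d) ((p ^ d - 1) * p)) : d + 1 ≤ N := by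
  obtain ⟨hAB, hBC, hAC⟩ := ABC_ne hp hd hq hqp
  set x₀ := p ^ (d + 1) * q ^ (d + 1) with hx₀
  set z := Multiset.replicate (d + 1) (p * q) with hz
  set z' : Multiset ℕ := {p ^ d, p * q ^ (d + 1)} with hz'
  have hPmB : Pm p d (p * q) := by
    have h1 := (Pm_pq hp hd hq hqp hqm 1 1).mpr ⟨le_rfl, ⟨1, by
      obtain ⟨e, rfl⟩ : ∃ e, d = e + 1 := ⟨d - 1, by omega⟩
      simp only [Nat.add_sub_cancel]; ring⟩⟩
    simpa using h1
  have hPmC : Pm p d (p * q ^ (d + 1)) := by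
    have h1 := (Pm_pq hp hd hq hqp hqm 1 (d + 1)).mpr ⟨le_rfl, ⟨d, by
      obtain ⟨e, rfl⟩ : ∃ e, d = e + 1 := ⟨d - 1, by omega⟩
      simp only [Nat.add_sub_cancel]; ring⟩⟩
    simpa using h1
  have hatomB : acmAtom (p ^ d) ((p ^ d - 1) * p) (p * q) := by
    apply atom_of_V_one hp hd hPmB
    have := Vp_pq hp hq hqp 1 1
    simpa using this
  have hatomC : acmAtom (p ^ d) ((p ^ d - 1) * p) (p * q ^ (d + 1)) := by
    apply atom_of_V_one hp hd hPmC
    have := Vp_pq hp hq hqp 1 (d + 1)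
    simpa using this
  have hfz : acmFactorization (p ^ d) ((p ^ d - 1) * p) x₀ z := by
    constructor
    · intro u hu
      have hu' : u ∈ Multiset.replicate (d + 1) (p * q) := by rwa [hz] at hu
      rw [Multiset.eq_of_mem_replicate hu']
      exact hatomB
    · rw [hz, Multiset.prod_replicate, mul_pow]
  have hfz' : acmFactorization (p ^ d) ((p ^ d - 1) * p) x₀ z' := by
    constructor
    · intro u hu
      rw [hz'] at hu
      rcases Multiset.mem_cons.mp hu with rfl | hu
      · exact a_atom hp hd
      · rw [Multiset.mem_singleton.mp hu]
        exact hatomC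
    · rw [hz']
      show p ^ d * (p * q ^ (d + 1) * 1) = x₀
      rw [hx₀]
      ring
  have hmem : acmMem (p ^ d) ((p ^ d - 1) * p) x₀ := by
    apply (mem_iff hp hd).mpr
    refine Or.inr ((Pm_pq hp hd hq hqp hqm (d + 1) (d + 1)).mpr ⟨by omega, ⟨d + 1, by
      obtain ⟨e, rfl⟩ : ∃ e, d = e + 1 := ⟨d - 1, by omega⟩
      simp only [Nat.add_sub_cancel]; ring⟩⟩)
  obtain ⟨L, hLn, hLh, hLl, hLf, hLc⟩ := hN x₀ hmem z z' hfz hfz'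
  have hcount : z.count (p * q) = d + 1 := by
    rw [hz, Multiset.count_replicate, if_pos rfl]
  have hcount' : z'.count (p * q) = 0 := by
    apply Multiset.count_eq_zero.mpr
    rw [hz']
    intro h
    rcases Multiset.mem_cons.mp h with h | h
    · exact hAB h.symm
    · exact hBC (Multiset.mem_singleton.mp h)
  have hne : z ≠ z' := by
    intro h
    rw [h, hcount'] at hcount
    omega
  have hRzz' : facDist z z' ≤ N := by
    apply chain_pair (fun u v h => by rwa [facDist_comm] at h) z z' hne L hLc hLh hLl
    intro w hw
    rcases fact_classify hp hd hq hqp hqm (hLf w hw) with h | h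
    · left; rw [hz]; exact h
    · right; rw [hz']; exact h
  have hge : d + 1 ≤ facDist z z' := by
    have h1 : (z - z').count (p * q) = d + 1 := by
      rw [Multiset.count_sub, hcount, hcount']
      omega
    have h2 : d + 1 ≤ Multiset.card (z - z') := by
      rw [← h1]
      exact Multiset.count_le_card _ _
    exact le_trans h2 (le_max_left _ _)
  omega

end lowerbound
end ACM19
/-- For every `n ≥ 2` and prime `p`, the local singular ACM
`M = M_{p^{n-1}, (p^{n-1}-1)p}` has `α = 1` (i.e. `gcd = p`), `β = n - 1`, and
catenary degree exactly `n`. -/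
theorem catenary_degree_realizes_all_values (n p : ℕ) (hn : 2 ≤ n) (hp : p.Prime) :
    Nat.gcd (p ^ (n - 1)) ((p ^ (n - 1) - 1) * p) = p ^ 1 ∧
    acmMem (p ^ (n - 1)) ((p ^ (n - 1) - 1) * p) (p ^ (n - 1)) ∧
    (∀ γ : ℕ, 0 < γ → γ < n - 1 →
      ¬ acmMem (p ^ (n - 1)) ((p ^ (n - 1) - 1) * p) (p ^ γ)) ∧
    IsLeast (acmCatSet (p ^ (n - 1)) ((p ^ (n - 1) - 1) * p)) n := by
  set d := n - 1 with hd_def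
  have hd : 1 ≤ d := by omega
  have hnd : n = d + 1 := by omega
  refine ⟨?_, ?_, ?_, ?_, ?_⟩
  · -- gcd computation
    have hco := ACM19.coprime_pf hp hd
    apply Nat.dvd_antisymm
    · rw [pow_one]
      have hg : Nat.gcd (p ^ d) ((p ^ d - 1) * p) ∣ p ^ d := Nat.gcd_dvd_left _ _
      obtain ⟨k, hk, hgk⟩ := (Nat.dvd_prime_pow hp).mp hg
      rw [hgk]
      rcases Nat.lt_or_ge k 2 with hk2 | hk2
      · interval_cases k <;> simp
      · exfalso
        have h2 : p ^ 2 ∣ (p ^ d - 1) * p :=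
          dvd_trans (pow_dvd_pow p hk2) (hgk ▸ Nat.gcd_dvd_right _ _)
        have h3 : p ∣ (p ^ d - 1) := by
          rw [pow_two] at h2
          exact (Nat.mul_dvd_mul_iff_right hp.pos).mp h2
        exact absurd h3 ((Nat.Prime.coprime_iff_not_dvd hp).mp hco)
    · rw [pow_one]
      exact Nat.dvd_gcd (dvd_pow_self p (by omega)) (Dvd.intro_left _ rfl)
  · -- p^d is a member
    exact Or.inr ⟨0, by simp⟩
  · -- no smaller power of p is a member
    intro γ hγ0 hγd hmem
    rcases (ACM19.mem_iff hp hd).mp hmem with h1 | h2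
    · have : 2 ≤ p ^ γ := Nat.one_lt_pow (by omega) hp.one_lt
      omega
    · have hge := h2.ge hp hd
      have : p ^ γ < p ^ d := Nat.pow_lt_pow_right hp.one_lt hγd
      omega
  · -- upper bound
    rw [hnd]
    exact ACM19.upper hp hd
  · -- lower bound
    intro N hN
    haveI : NeZero (p ^ d - 1) := ⟨by have := ACM19.two_le_a hp hd; omega⟩
    have hUnit : IsUnit ((p ^ (d - 1) : ℕ) : ZMod (p ^ d - 1)) := by
      rw [ZMod.isUnit_iff_coprime]
      exact Nat.Coprime.pow_left _ (ACM19.coprime_pf hp hd)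
    obtain ⟨q, hqgt, hqprime, hqmod⟩ := Nat.forall_exists_prime_gt_and_eq_mod hUnit p
    have hqm : q ≡ p ^ (d - 1) [MOD p ^ d - 1] := (ZMod.natCast_eq_natCast_iff _ _ _).mp hqmod
    have hqp : p ≠ q := by omega
    have := ACM19.lower hp hd hqprime hqp hqm hN
    omega
end
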